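/- arXiv:2411.19351 — 6 statements merged into one kernel-verified Lean document; each statement's English description precedes it below -/
import Mathlib

section
/- Let p be a prime and n ≥ 2 with p > n, and fix k ∈ F_p with k ≠ 0. The number of vectors (x_1,...,x_{n-1}) ∈ F_p^{n-1} such that x_i ≠ 0 for all i, x_i ≠ k for all i, x_{i_2} ≠ x_{i_1} for all i_1 < i_2, and x_{i_2} - x_{i_1} ≠ k for all i_1 ≤ i_2, equals (p-n)^{n-1}. -/
open Finset

namespace Stmt0Aux

variable {j : ℕ}

/-- number of indices with smaller value -/
def cLT (w : Fin j → ℕ) (b : Fin j) : ℕ := #(univ.filter fun a => w a < w b)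

/-- number of later indices with equal value -/
def cAft (w : Fin j → ℕ) (b : Fin j) : ℕ := #(univ.filter fun a => b < a ∧ w a = w b)

def phi (w : Fin j → ℕ) (b : Fin j) : ℕ := w b - cLT w b

def psi (w : Fin j → ℕ) (b : Fin j) : ℕ := w b + cLT w b + cAft w b

def Full (w : Fin j → ℕ) (c b : Fin j) : Prop := ∀ v, w c ≤ v → v ≤ w b → ∃ d, w d = v

lemma cLT_le {w : Fin j → ℕ} (hinj : Function.Injective w) (b : Fin j) :
    cLT w b ≤ w b := by
  unfold cLT
  rw [← Finset.card_range (w b)]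
  apply Finset.card_le_card_of_injOn w _ hinj.injOn
  intro a ha
  simp only [Finset.mem_coe, mem_filter, mem_univ, true_and] at ha
  simpa using ha

lemma cLT_split {w : Fin j → ℕ} {c b : Fin j} (h : w c ≤ w b) :
    cLT w b = cLT w c + #(univ.filter fun a => w c ≤ w a ∧ w a < w b) := by
  classical
  have key := Finset.card_filter_add_card_filter_not
    (s := univ.filter fun a => w a < w b) (p := fun a => w a < w c)
  rw [Finset.filter_filter, Finset.filter_filter] at key
  have e1 : (univ.filter fun a => w a < w b ∧ w a < w c)
      = univ.filter fun a => w a < w c := by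
    apply Finset.filter_congr; intro a _
    constructor
    · rintro ⟨_, h2⟩; exact h2
    · intro h2; exact ⟨lt_of_lt_of_le h2 h, h2⟩
  have e2 : (univ.filter fun a => w a < w b ∧ ¬ w a < w c)
      = univ.filter fun a => w c ≤ w a ∧ w a < w b := by
    apply Finset.filter_congr; intro a _
    constructor
    · rintro ⟨h1, h2⟩; exact ⟨le_of_not_gt h2, h1⟩
    · rintro ⟨h1, h2⟩; exact ⟨h2, not_lt.mpr h1⟩
  rw [e1, e2] at key
  unfold cLT
  omega

lemma cMid_le {w : Fin j → ℕ} (hinj : Function.Injective w) (c b : Fin j) :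
    #(univ.filter fun a => w c ≤ w a ∧ w a < w b) ≤ w b - w c := by
  rw [← Nat.card_Ico (w c) (w b)]
  apply Finset.card_le_card_of_injOn w _ hinj.injOn
  intro a ha
  simp only [Finset.mem_coe, mem_filter, mem_univ, true_and] at ha
  simpa [Finset.mem_Ico] using ha

lemma cMid_le_gap {w : Fin j → ℕ} (hinj : Function.Injective w) {c b : Fin j} {v : ℕ}
    (hv1 : w c ≤ v) (hv2 : v < w b) (hgap : ∀ d, w d ≠ v) :
    #(univ.filter fun a => w c ≤ w a ∧ w a < w b) + 1 ≤ w b - w c := by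
  have hle : #(univ.filter fun a => w c ≤ w a ∧ w a < w b)
      ≤ #((Finset.Ico (w c) (w b)).erase v) := by
    apply Finset.card_le_card_of_injOn w _ hinj.injOn
    intro a ha
    simp only [Finset.mem_coe, mem_filter, mem_univ, true_and] at ha
    simp only [Finset.mem_coe, Finset.mem_erase, Finset.mem_Ico]
    exact ⟨hgap a, ha.1, ha.2⟩
  rw [Finset.card_erase_of_mem (by simp [Finset.mem_Ico, hv1, hv2]), Nat.card_Ico] at hle
  omega

lemma cMid_eq_of_full {w : Fin j → ℕ} (hinj : Function.Injective w) {c b : Fin j}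
    (h : w c ≤ w b) (hfull : Full w c b) :
    #(univ.filter fun a => w c ≤ w a ∧ w a < w b) = w b - w c := by
  rw [← Nat.card_Ico (w c) (w b)]
  apply Finset.card_bij (fun a _ => w a)
  · intro a ha
    simp only [mem_filter, mem_univ, true_and] at ha
    simp [Finset.mem_Ico, ha.1, ha.2]
  · intro a1 _ a2 _ he; exact hinj he
  · intro v hv
    simp only [Finset.mem_Ico] at hv
    obtain ⟨d, hd⟩ := hfull v hv.1 (le_of_lt hv.2)
    exact ⟨d, by simp [hd, hv.1, hv.2], hd⟩

lemma phi_mono {w : Fin j → ℕ} (hinj : Function.Injective w) {c b : Fin j}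
    (h : w c ≤ w b) : phi w c ≤ phi w b := by
  have h1 := cLT_split (w := w) h
  have h2 := cMid_le hinj c b
  have h3 := cLT_le hinj c
  unfold phi; omega

lemma phi_strict {w : Fin j → ℕ} (hinj : Function.Injective w) {c b : Fin j} {v : ℕ}
    (hv1 : w c ≤ v) (hv2 : v < w b) (hgap : ∀ d, w d ≠ v) : phi w c < phi w b := by
  have h1 := cLT_split (w := w) (c := c) (b := b) (le_trans hv1 (le_of_lt hv2))
  have h2 := cMid_le_gap hinj hv1 hv2 hgap
  have h3 := cLT_le hinj c
  unfold phi; omega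

lemma phi_eq_of_full {w : Fin j → ℕ} (hinj : Function.Injective w) {c b : Fin j}
    (h : w c ≤ w b) (hfull : Full w c b) : phi w c = phi w b := by
  have h1 := cLT_split (w := w) h
  have h2 := cMid_eq_of_full hinj h hfull
  have h3 := cLT_le hinj c
  unfold phi; omega

lemma chain_lt {w : Fin j → ℕ} (hstep : ∀ a b : Fin j, a < b → w b ≠ w a + 1) :
    ∀ t : ℕ, ∀ c b : Fin j, w b = w c + (t + 1) → Full w c b → b < c := by
  intro t
  induction t with
  | zero =>
    intro c b hb _
    rcases lt_trichotomy b c with h | h | h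
    · exact h
    · subst h; omega
    · exact absurd hb (hstep c b h)
  | succ t ih =>
    intro c b hb hfull
    obtain ⟨d, hd⟩ := hfull (w c + (t + 1)) (by omega) (by omega)
    have hdc : d < c := ih c d (by omega) (fun v h1 h2 => hfull v h1 (by omega))
    have hbd : b < d := by
      rcases lt_trichotomy b d with h | h | h
      · exact h
      · subst h; omega
      · exact absurd (by omega) (hstep d b h)
    exact lt_trans hbd hdc


lemma psi_phi {w : Fin j → ℕ} (hinj : Function.Injective w)
    (hstep : ∀ a b : Fin j, a < b → w b ≠ w a + 1) (b : Fin j) :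
    psi (phi w) b = w b := by
  classical
  have iff1 : ∀ a : Fin j, phi w a < phi w b ↔ (w a < w b ∧ ¬ Full w a b) := by
    intro a
    constructor
    · intro h
      have hlt : w a < w b := by
        by_contra hc
        exact absurd (phi_mono hinj (le_of_not_gt hc)) (not_le.mpr h)
      refine ⟨hlt, fun hfull => ?_⟩
      exact absurd (phi_eq_of_full hinj (le_of_lt hlt) hfull) (ne_of_lt h)
    · rintro ⟨hlt, hnf⟩
      unfold Full at hnf
      push_neg at hnf
      obtain ⟨v, hv1, hv2, hv3⟩ := hnf
      have hvb : v < w b := by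
        rcases lt_or_eq_of_le hv2 with h | h
        · exact h
        · exact absurd h.symm (hv3 b)
      exact phi_strict hinj hv1 hvb hv3
  have iff2 : ∀ a : Fin j, (b < a ∧ phi w a = phi w b) ↔ (w a < w b ∧ Full w a b) := by
    intro a
    constructor
    · rintro ⟨hba, heq⟩
      have hne : w a ≠ w b := fun h => absurd (hinj h) (ne_of_gt hba)
      rcases lt_or_gt_of_ne hne with hlt | hgt
      · refine ⟨hlt, ?_⟩
        by_contra hnf
        unfold Full at hnf
        push_neg at hnf
        obtain ⟨v, hv1, hv2, hv3⟩ := hnf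
        have hvb : v < w b := by
          rcases lt_or_eq_of_le hv2 with h | h
          · exact h
          · exact absurd h.symm (hv3 b)
        exact absurd heq (ne_of_lt (phi_strict hinj hv1 hvb hv3))
      · -- w b < w a
        have hfull : Full w b a := by
          by_contra hnf
          unfold Full at hnf
          push_neg at hnf
          obtain ⟨v, hv1, hv2, hv3⟩ := hnf
          have hva : v < w a := by
            rcases lt_or_eq_of_le hv2 with h | h
            · exact h
            · exact absurd h.symm (hv3 a)
          exact absurd heq.symm (ne_of_lt (phi_strict hinj hv1 hva hv3))
        have := chain_lt hstep (w a - w b - 1) b a (by omega) hfull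
        omega
    · rintro ⟨hlt, hfull⟩
      refine ⟨chain_lt hstep (w b - w a - 1) a b (by omega) hfull,
        phi_eq_of_full hinj (le_of_lt hlt) hfull⟩
  have hsum : cLT (phi w) b + cAft (phi w) b = cLT w b := by
    have key := Finset.card_filter_add_card_filter_not
      (s := univ.filter fun a => w a < w b) (p := fun a => ¬ Full w a b)
    rw [Finset.filter_filter, Finset.filter_filter] at key
    have e1 : (univ.filter fun a => w a < w b ∧ ¬ Full w a b)
        = univ.filter fun a => phi w a < phi w b := by
      apply Finset.filter_congr; intro a _; exact (iff1 a).symm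
    have e2 : (univ.filter fun a => w a < w b ∧ ¬¬ Full w a b)
        = univ.filter fun a => b < a ∧ phi w a = phi w b := by
      apply Finset.filter_congr; intro a _
      rw [not_not]
      exact (iff2 a).symm
    rw [e1, e2] at key
    unfold cLT cAft
    omega
  have h1 := cLT_le hinj b
  unfold psi
  rw [add_assoc, hsum]
  unfold phi
  omega

lemma psi_add_two {F : Fin j → ℕ} {a b : Fin j} (h : F a < F b) :
    psi F a + 2 ≤ psi F b := by
  classical
  have hkey : cLT F a + cAft F a + 1 ≤ cLT F b := by
    have hsub : (univ.filter fun a' => F a' < F a)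
        ∪ (univ.filter fun a' => a < a' ∧ F a' = F a) ∪ {a}
        ⊆ univ.filter fun a' => F a' < F b := by
      intro x hx
      simp only [Finset.mem_union, mem_filter, mem_univ, true_and,
        Finset.mem_singleton] at hx ⊢
      rcases hx with (hx | hx) | hx
      · omega
      · omega
      · subst hx; exact h
    have hd1 : Disjoint (univ.filter fun a' => F a' < F a)
        (univ.filter fun a' => a < a' ∧ F a' = F a) := by
      rw [Finset.disjoint_left]
      intro x hx1 hx2
      simp only [mem_filter, mem_univ, true_and] at hx1 hx2
      omega
    have hd2 : Disjoint ((univ.filter fun a' => F a' < F a)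
        ∪ (univ.filter fun a' => a < a' ∧ F a' = F a)) ({a} : Finset (Fin j)) := by
      rw [Finset.disjoint_singleton_right, Finset.mem_union]
      push_neg
      constructor <;> simp
    have hcard := Finset.card_le_card hsub
    rw [Finset.card_union_of_disjoint hd2, Finset.card_union_of_disjoint hd1,
      Finset.card_singleton] at hcard
    unfold cLT cAft
    exact hcard
  unfold psi
  omega

lemma psi_lt_of_eq {F : Fin j → ℕ} {a b : Fin j} (heq : F a = F b) (hba : b < a) :
    psi F a < psi F b := by
  have h1 : cLT F a = cLT F b := by
    unfold cLT
    apply congrArg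
    apply Finset.filter_congr
    intro x _
    rw [heq]
  have h2 : cAft F a + 1 ≤ cAft F b := by
    have hsub : (univ.filter fun a' => a < a' ∧ F a' = F a) ∪ {a}
        ⊆ univ.filter fun a' => b < a' ∧ F a' = F b := by
      intro x hx
      simp only [Finset.mem_union, mem_filter, mem_univ, true_and,
        Finset.mem_singleton] at hx ⊢
      rcases hx with hx | hx
      · exact ⟨lt_trans hba hx.1, heq ▸ hx.2⟩
      · subst hx; exact ⟨hba, heq⟩
    have hd : Disjoint (univ.filter fun a' => a < a' ∧ F a' = F a) ({a} : Finset (Fin j)) := by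
      rw [Finset.disjoint_singleton_right]
      simp
    have hcard := Finset.card_le_card hsub
    rw [Finset.card_union_of_disjoint hd, Finset.card_singleton] at hcard
    unfold cAft
    exact hcard
  unfold psi
  omega

lemma psi_lt_iff (F : Fin j → ℕ) (a b : Fin j) :
    psi F a < psi F b ↔ (F a < F b ∨ (F a = F b ∧ b < a)) := by
  constructor
  · intro h
    by_contra hc
    push_neg at hc
    obtain ⟨h1, h2⟩ := hc
    rcases lt_trichotomy (F a) (F b) with h3 | h3 | h3
    · omega
    · rcases lt_trichotomy a b with h4 | h4 | h4
      · have := psi_lt_of_eq h3.symm h4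
        omega
      · subst h4; omega
      · exact absurd h4 (not_lt.mpr (h2 h3))
    · have := psi_add_two h3
      omega
  · rintro (h | ⟨h1, h2⟩)
    · have := psi_add_two h
      omega
    · exact psi_lt_of_eq h1 h2

lemma phi_psi (F : Fin j → ℕ) (b : Fin j) : phi (psi F) b = F b := by
  classical
  have hkey : cLT (psi F) b = cLT F b + cAft F b := by
    have e : (univ.filter fun a => psi F a < psi F b)
        = (univ.filter fun a => F a < F b) ∪ (univ.filter fun a => b < a ∧ F a = F b) := by
      rw [← Finset.filter_or]
      apply Finset.filter_congr
      intro a _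
      rw [psi_lt_iff]
      constructor
      · rintro (h | ⟨h1, h2⟩)
        · exact Or.inl h
        · exact Or.inr ⟨h2, h1⟩
      · rintro (h | ⟨h1, h2⟩)
        · exact Or.inl h
        · exact Or.inr ⟨h2, h1⟩
    have hd : Disjoint (univ.filter fun a => F a < F b)
        (univ.filter fun a => b < a ∧ F a = F b) := by
      rw [Finset.disjoint_left]
      intro x hx1 hx2
      simp only [mem_filter, mem_univ, true_and] at hx1 hx2
      omega
    unfold cLT cAft
    rw [e, Finset.card_union_of_disjoint hd]
  unfold phi
  rw [hkey]
  unfold psi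
  omega

lemma psi_bound {F : Fin j → ℕ} {r q : ℕ} (hF : ∀ a, F a < r) (hrq : r + j = q + 1)
    (b : Fin j) : psi F b < q := by
  have hkey : cLT F b + cAft F b + 1 ≤ j := by
    have hsub : (univ.filter fun a' => F a' < F b)
        ∪ (univ.filter fun a' => b < a' ∧ F a' = F b) ⊆ univ.erase b := by
      intro x hx
      simp only [Finset.mem_union, mem_filter, mem_univ, true_and,
        Finset.mem_erase, Finset.mem_univ, and_true] at hx ⊢
      rcases hx with hx | hx
      · intro h; subst h; omega
      · intro h; subst h; exact absurd hx.1 (lt_irrefl _)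
    have hd : Disjoint (univ.filter fun a' => F a' < F b)
        (univ.filter fun a' => b < a' ∧ F a' = F b) := by
      rw [Finset.disjoint_left]
      intro x hx1 hx2
      simp only [mem_filter, mem_univ, true_and] at hx1 hx2
      omega
    have hcard := Finset.card_le_card hsub
    rw [Finset.card_union_of_disjoint hd, Finset.card_erase_of_mem (Finset.mem_univ b),
      Finset.card_univ, Fintype.card_fin] at hcard
    have hj : 0 < j := b.pos
    unfold cLT cAft
    omega
  have := hF b
  unfold psi
  omega

lemma phi_bound {w : Fin j → ℕ} {r q : ℕ} (hinj : Function.Injective w)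
    (hw : ∀ a, w a < q) (hrq : r + j = q + 1) (b : Fin j) : phi w b < r := by
  have hGT : #(univ.filter fun a => w b < w a) + w b + 1 ≤ q := by
    have hle : #(univ.filter fun a => w b < w a) ≤ #(Finset.Ioc (w b) (q - 1)) := by
      apply Finset.card_le_card_of_injOn w _ hinj.injOn
      intro a ha
      simp only [Finset.mem_coe, mem_filter, mem_univ, true_and] at ha
      simp only [Finset.mem_coe, Finset.mem_Ioc]
      exact ⟨ha, by have := hw a; omega⟩
    rw [Nat.card_Ioc] at hle
    have := hw b
    omega
  have htri : cLT w b + #(univ.filter fun a => w b < w a) + 1 = j := by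
    classical
    have k1 := Finset.card_filter_add_card_filter_not
      (s := (univ : Finset (Fin j))) (p := fun a => w a < w b)
    have k2 := Finset.card_filter_add_card_filter_not
      (s := univ.filter fun a => ¬ w a < w b) (p := fun a => w b < w a)
    rw [Finset.filter_filter, Finset.filter_filter] at k2
    have e1 : (univ.filter fun a => ¬ w a < w b ∧ w b < w a)
        = univ.filter fun a => w b < w a := by
      apply Finset.filter_congr
      intro a _
      constructor
      · rintro ⟨_, h⟩; exact h
      · intro h; exact ⟨by omega, h⟩
    have e2 : (univ.filter fun a => ¬ w a < w b ∧ ¬ w b < w a)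
        = ({b} : Finset (Fin j)) := by
      apply Finset.ext
      intro x
      simp only [mem_filter, mem_univ, true_and, Finset.mem_singleton]
      constructor
      · rintro ⟨h1, h2⟩
        exact hinj (by omega)
      · intro h; subst h; omega
    rw [e1, e2, Finset.card_singleton] at k2
    rw [Finset.card_univ, Fintype.card_fin] at k1
    unfold cLT
    omega
  have h3 := cLT_le hinj b
  unfold phi
  omega



lemma pair_inj {w : Fin j → ℕ} (h : ∀ i1 i2 : Fin j, i1 < i2 → w i1 ≠ w i2) :
    Function.Injective w := by
  intro a b hab
  by_contra hne
  rcases lt_or_gt_of_ne hne with hl | hl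
  · exact h a b hl hab
  · exact h b a hl hab.symm

lemma psi_valid (F : Fin j → ℕ) {i1 i2 : Fin j} (h : i1 < i2) :
    psi F i2 ≠ psi F i1 ∧ psi F i2 ≠ psi F i1 + 1 := by
  rcases lt_trichotomy (F i1) (F i2) with h3 | h3 | h3
  · have := psi_add_two h3; omega
  · have := psi_lt_of_eq h3.symm h; omega
  · have := psi_add_two h3; omega

lemma lineCount (j q r : ℕ) (hrq : r + j = q + 1) :
    #(univ.filter fun z : Fin j → Fin q =>
      (∀ i1 i2 : Fin j, i1 < i2 → z i1 ≠ z i2) ∧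
      (∀ i1 i2 : Fin j, i1 < i2 → (z i2 : ℕ) ≠ (z i1 : ℕ) + 1)) = r ^ j := by
  have hcard : (univ : Finset (Fin j → Fin r)).card = r ^ j := by
    rw [Finset.card_univ, Fintype.card_fun, Fintype.card_fin, Fintype.card_fin]
  rw [← hcard]
  have hwinj : ∀ z : Fin j → Fin q, (∀ i1 i2 : Fin j, i1 < i2 → z i1 ≠ z i2) →
      Function.Injective (fun a => (z a : ℕ)) := by
    intro z hz
    apply pair_inj
    intro i1 i2 hlt he
    exact hz i1 i2 hlt (Fin.val_injective he)
  apply Finset.card_bij'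
    (i := fun z hz => fun b : Fin j =>
      (⟨phi (fun a => (z a : ℕ)) b, by
        have hm := (Finset.mem_filter.mp hz).2
        exact phi_bound (hwinj z hm.1) (fun a => (z a).isLt) hrq b⟩ : Fin r))
    (j := fun F _ => fun b : Fin j =>
      (⟨psi (fun a => (F a : ℕ)) b,
        psi_bound (fun a => (F a).isLt) hrq b⟩ : Fin q))
  case hi =>
    intro z hz
    exact Finset.mem_univ _
  case hj =>
    intro F hF
    rw [Finset.mem_filter]
    refine ⟨Finset.mem_univ _, ?_, ?_⟩
    · intro i1 i2 hlt he
      have := (psi_valid (fun a => (F a : ℕ)) hlt).1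
      exact this (congrArg Fin.val he).symm
    · intro i1 i2 hlt
      exact (psi_valid (fun a => (F a : ℕ)) hlt).2
  case left_inv =>
    intro z hz
    funext b
    apply Fin.val_injective
    have hm := (Finset.mem_filter.mp hz).2
    exact psi_phi (hwinj z hm.1) (fun a b hab => hm.2 a b hab) b
  case right_inv =>
    intro F hF
    funext b
    apply Fin.val_injective
    exact phi_psi (fun a => (F a : ℕ)) b


lemma val_facts {p : ℕ} [Fact p.Prime] [NeZero p] {k xb : ZMod p} (hk : k ≠ 0)
    (h0 : xb ≠ 0) (h1 : xb ≠ k) : 2 ≤ (xb * k⁻¹).val ∧ (xb * k⁻¹).val < p := by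
  have hlt := ZMod.val_lt (xb * k⁻¹)
  have hne0 : (xb * k⁻¹).val ≠ 0 := by
    rw [Ne, ZMod.val_eq_zero]
    exact mul_ne_zero h0 (inv_ne_zero hk)
  have hne1 : (xb * k⁻¹).val ≠ 1 := by
    intro h
    have h2 : ((((xb * k⁻¹).val : ℕ)) : ZMod p) = xb * k⁻¹ :=
      ZMod.natCast_rightInverse _
    rw [h, Nat.cast_one] at h2
    apply h1
    have := congrArg (· * k) h2.symm
    simpa [mul_assoc, inv_mul_cancel₀ hk] using this
  omega

end Stmt0Aux

open Stmt0Aux in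
theorem stmt_0 (p n : ℕ) (hp : p.Prime) [NeZero p] (hn : 2 ≤ n) (hpn : n < p)
    (k : ZMod p) (hk : k ≠ 0) :
    (Finset.univ.filter (fun x : Fin (n - 1) → ZMod p =>
      (∀ i, x i ≠ 0) ∧ (∀ i, x i ≠ k) ∧
      (∀ i1 i2 : Fin (n - 1), i1 < i2 → x i1 ≠ x i2) ∧
      (∀ i1 i2 : Fin (n - 1), i1 ≤ i2 → x i2 - x i1 ≠ k))).card
      = (p - n) ^ (n - 1) := by
  haveI : Fact p.Prime := ⟨hp⟩
  have hp3 : 3 ≤ p := by omega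
  have hcancel : ∀ a b : ZMod p, a * k = b * k → a = b := by
    intro a b h
    exact mul_right_cancel₀ hk h
  have hA : (Finset.univ.filter (fun x : Fin (n - 1) → ZMod p =>
      (∀ i, x i ≠ 0) ∧ (∀ i, x i ≠ k) ∧
      (∀ i1 i2 : Fin (n - 1), i1 < i2 → x i1 ≠ x i2) ∧
      (∀ i1 i2 : Fin (n - 1), i1 ≤ i2 → x i2 - x i1 ≠ k))).card
      = #(univ.filter fun z : Fin (n - 1) → Fin (p - 2) =>
        (∀ i1 i2 : Fin (n - 1), i1 < i2 → z i1 ≠ z i2) ∧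
        (∀ i1 i2 : Fin (n - 1), i1 < i2 → (z i2 : ℕ) ≠ (z i1 : ℕ) + 1)) := by
    apply Finset.card_bij'
      (i := fun x hx => fun b : Fin (n - 1) =>
        (⟨(x b * k⁻¹).val - 2, by
          have hm := (Finset.mem_filter.mp hx).2
          have hv := val_facts hk (hm.1 b) (hm.2.1 b)
          omega⟩ : Fin (p - 2)))
      (j := fun z hz => fun b : Fin (n - 1) => (((z b : ℕ) + 2 : ℕ) : ZMod p) * k)
    case hi =>
      intro x hx
      have hm := (Finset.mem_filter.mp hx).2
      rw [Finset.mem_filter]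
      refine ⟨Finset.mem_univ _, ?_, ?_⟩
      · intro i1 i2 hlt he
        have hv1 := val_facts hk (hm.1 i1) (hm.2.1 i1)
        have hv2 := val_facts hk (hm.1 i2) (hm.2.1 i2)
        have he' : (x i1 * k⁻¹).val = (x i2 * k⁻¹).val := by
          have := congrArg Fin.val he
          simp only at this
          omega
        have heq : x i1 * k⁻¹ = x i2 * k⁻¹ := by
          rw [← ZMod.natCast_rightInverse (x i1 * k⁻¹),
            ← ZMod.natCast_rightInverse (x i2 * k⁻¹), he']
        have : x i1 = x i2 := by
          have := congrArg (· * k) heq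
          simpa [mul_assoc, inv_mul_cancel₀ hk] using this
        exact hm.2.2.1 i1 i2 hlt this
      · intro i1 i2 hlt he
        simp only at he
        have hv1 := val_facts hk (hm.1 i1) (hm.2.1 i1)
        have hv2 := val_facts hk (hm.1 i2) (hm.2.1 i2)
        have he' : (x i2 * k⁻¹).val = (x i1 * k⁻¹).val + 1 := by omega
        have heq : x i2 * k⁻¹ = x i1 * k⁻¹ + 1 := by
          rw [← ZMod.natCast_rightInverse (x i2 * k⁻¹),
            ← ZMod.natCast_rightInverse (x i1 * k⁻¹), ← Nat.cast_one, ← Nat.cast_add, he']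
        have hx2 : x i2 = x i1 + k := by
          have := congrArg (· * k) heq
          simpa [add_mul, mul_assoc, inv_mul_cancel₀ hk] using this
        apply hm.2.2.2 i1 i2 (le_of_lt hlt)
        rw [hx2]
        ring
    case hj =>
      intro z hz
      have hm := (Finset.mem_filter.mp hz).2
      have hvc : ∀ b : Fin (n - 1), ((((z b : ℕ) + 2 : ℕ) : ZMod p)).val = (z b : ℕ) + 2 := by
        intro b
        exact ZMod.val_cast_of_lt (by have := (z b).isLt; omega)
      have hcne : ∀ b : Fin (n - 1), (((z b : ℕ) + 2 : ℕ) : ZMod p) ≠ 0 := by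
        intro b h
        have := hvc b
        rw [h, ZMod.val_zero] at this
        omega
      rw [Finset.mem_filter]
      refine ⟨Finset.mem_univ _, fun b => mul_ne_zero (hcne b) hk, fun b hb => ?_, ?_, ?_⟩
      · have : (((z b : ℕ) + 2 : ℕ) : ZMod p) = 1 :=
          hcancel _ 1 (hb.trans (one_mul k).symm)
        have h2 := hvc b
        rw [this, ZMod.val_one p] at h2
        omega
      · intro i1 i2 hlt he
        have heq := hcancel _ _ he
        have := congrArg ZMod.val heq
        rw [hvc i1, hvc i2] at this
        exact hm.1 i1 i2 hlt (Fin.val_injective (by omega))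
      · intro i1 i2 hle he
        rcases eq_or_lt_of_le hle with heq | hlt
        · subst heq
          rw [sub_self] at he
          exact hk he.symm
        · rw [sub_eq_iff_eq_add] at he
          simp only at he
          have he2 : (((z i2 : ℕ) + 2 : ℕ) : ZMod p) * k
              = ((((z i1 : ℕ) + 2 : ℕ) : ZMod p) + 1) * k := by
            rw [he]
            ring
          have heq := hcancel _ _ he2
          have he3 : ((((z i2 : ℕ) + 2 : ℕ)) : ZMod p) = (((z i1 : ℕ) + 3 : ℕ) : ZMod p) := by
            rw [heq]
            push_cast
            ring
          have hmod := (ZMod.natCast_eq_natCast_iff _ _ _).mp he3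
          have h1 : ((z i2 : ℕ) + 2) % p = (z i2 : ℕ) + 2 :=
            Nat.mod_eq_of_lt (by have := (z i2).isLt; omega)
          have hi1 := (z i1).isLt
          have hi2 := (z i2).isLt
          rcases eq_or_lt_of_le (show (z i1 : ℕ) + 3 ≤ p by omega) with hc | hc
          · have h2 : ((z i1 : ℕ) + 3) % p = 0 := by rw [hc, Nat.mod_self]
            unfold Nat.ModEq at hmod
            omega
          · have h2 : ((z i1 : ℕ) + 3) % p = (z i1 : ℕ) + 3 := Nat.mod_eq_of_lt hc
            unfold Nat.ModEq at hmod
            have : (z i2 : ℕ) = (z i1 : ℕ) + 1 := by omega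
            exact hm.2 i1 i2 hlt this
    case left_inv =>
      intro x hx
      have hm := (Finset.mem_filter.mp hx).2
      funext b
      have hv := val_facts hk (hm.1 b) (hm.2.1 b)
      show ((((x b * k⁻¹).val - 2 + 2 : ℕ)) : ZMod p) * k = x b
      have h2 : (x b * k⁻¹).val - 2 + 2 = (x b * k⁻¹).val := by omega
      rw [h2, ZMod.natCast_rightInverse (x b * k⁻¹), mul_assoc, inv_mul_cancel₀ hk, mul_one]
    case right_inv =>
      intro z hz
      funext b
      apply Fin.val_injective
      show ((((z b : ℕ) + 2 : ℕ) : ZMod p) * k * k⁻¹).val - 2 = (z b : ℕ)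
      rw [mul_assoc, mul_inv_cancel₀ hk, mul_one,
        ZMod.val_cast_of_lt (by have := (z b).isLt; omega)]
      omega
  have harith : (p - n) + (n - 1) = (p - 2) + 1 := by clear hA hcancel; omega
  have hB := lineCount (n - 1) (p - 2) (p - n) harith
  rw [hA]
  exact hB
end

section
/- Let p be a prime and n ≥ 2 with p > n. The number of vectors (x_1,...,x_n) ∈ F_p^n such that x_i ≠ 0 for all i, x_{i_1} ≠ x_{i_2} for all i_1 < i_2, and x_n - x_{i_2} + x_{i_1} ≠ 0 for all 1 ≤ i_1 ≤ i_2 < n, equals (p-1)(p-n)^{n-1}. -/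
open Finset Function

section Core

variable {m N : ℕ}

private lemma chainA (a : Fin m → ℕ) (hinj : Injective a)
    (hcond : ∀ i j : Fin m, i < j → a j ≠ a i + 1) :
    ∀ d : ℕ, ∀ i j : Fin m, a j - a i = d → a i < a j →
      (∀ v : ℕ, a i ≤ v → v < a j → ∃ k, a k = v) → j < i := by
  intro d
  induction d using Nat.strong_induction_on with
  | _ d ih =>
    intro i j hd hlt hfull
    obtain ⟨k, hk⟩ := hfull (a j - 1) (by omega) (by omega)
    have hkj : j < k := by
      rcases lt_trichotomy k j with h | h | h
      · exact absurd (show a j = a k + 1 by omega) (hcond k j h)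
      · subst h; omega
      · exact h
    rcases eq_or_lt_of_le (show a i ≤ a k by omega) with h | h
    · have hik : i = k := hinj h
      omega
    · have hki : k < i := ih (a k - a i) (by omega) i k rfl h
        (fun v hv1 hv2 => hfull v hv1 (by omega))
      exact lt_trans hkj hki

private def rnk (a : Fin m → ℕ) (j : Fin m) : ℕ :=
  (univ.filter (fun i => a i < a j)).card

private def qrk (b : Fin m → ℕ) (j : Fin m) : ℕ :=
  (univ.filter (fun i => b i < b j ∨ (b i = b j ∧ (j : ℕ) < (i : ℕ)))).card

private lemma qrk_lt_qrk {b : Fin m → ℕ} {i j : Fin m}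
    (h : b i < b j ∨ (b i = b j ∧ (j : ℕ) < (i : ℕ))) :
    qrk b i < qrk b j := by
  apply Finset.card_lt_card
  constructor
  · intro k hk
    simp only [mem_filter, mem_univ, true_and] at hk ⊢
    omega
  · intro hsub
    have : i ∈ univ.filter (fun k => b k < b j ∨ (b k = b j ∧ (j : ℕ) < (k : ℕ))) := by
      simp only [mem_filter, mem_univ, true_and]; omega
    have hi := hsub this
    simp only [mem_filter, mem_univ, true_and] at hi
    omega

private lemma qrk_lt_m (b : Fin m → ℕ) (j : Fin m) : qrk b j < m := by
  have h : (univ.filter (fun i => b i < b j ∨ (b i = b j ∧ (j : ℕ) < (i : ℕ)))) ⊂ univ := by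
    rw [Finset.ssubset_univ_iff]
    intro h
    have : j ∈ univ.filter (fun i => b i < b j ∨ (b i = b j ∧ (j : ℕ) < (i : ℕ))) := by
      rw [h]; exact mem_univ j
    simp only [mem_filter, mem_univ, true_and] at this
    omega
  simpa [qrk] using Finset.card_lt_card h

private lemma rnk_split {a : Fin m → ℕ} {i j : Fin m} (h : a i ≤ a j) :
    rnk a j = rnk a i + (univ.filter (fun k => a i ≤ a k ∧ a k < a j)).card := by
  unfold rnk
  rw [← Finset.card_union_of_disjoint]
  · congr 1
    ext k
    simp only [mem_filter, mem_union, mem_univ, true_and]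
    omega
  · rw [Finset.disjoint_left]
    intro k hk hk'
    simp only [mem_filter, mem_univ, true_and] at hk hk'
    omega

private lemma midcard_le {a : Fin m → ℕ} (hinj : Injective a) (i j : Fin m) :
    (univ.filter (fun k => a i ≤ a k ∧ a k < a j)).card ≤ a j - a i := by
  have := Finset.card_le_card_of_injOn a
    (s := univ.filter (fun k => a i ≤ a k ∧ a k < a j))
    (t := Finset.Ico (a i) (a j))
    (by intro k hk; simp only [Finset.mem_coe, mem_filter, mem_univ, true_and] at hk
        simp only [Finset.mem_coe, Finset.mem_Ico]; omega)
    (by intro k₁ h₁ k₂ h₂ hv; exact hinj hv)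
  simpa [Nat.card_Ico] using this

private lemma midcard_full {a : Fin m → ℕ} (hinj : Injective a) {i j : Fin m}
    (hcard : (univ.filter (fun k => a i ≤ a k ∧ a k < a j)).card = a j - a i) :
    ∀ v : ℕ, a i ≤ v → v < a j → ∃ k, a k = v := by
  intro v hv1 hv2
  have hsurj := Finset.surj_on_of_inj_on_of_card_le
    (s := univ.filter (fun k => a i ≤ a k ∧ a k < a j))
    (t := Finset.Ico (a i) (a j))
    (fun k _ => a k)
    (by intro k hk; simp only [mem_filter, mem_univ, true_and] at hk
        simp only [Finset.mem_Ico]; omega)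
    (by intro k₁ k₂ h₁ h₂ hv; exact hinj hv)
    (by rw [Nat.card_Ico, hcard])
    v (by simp only [Finset.mem_Ico]; omega)
  obtain ⟨k, _, hk⟩ := hsurj
  exact ⟨k, hk.symm⟩

private lemma rnk_le {a : Fin m → ℕ} (hinj : Injective a) (j : Fin m) :
    rnk a j ≤ a j := by
  have := Finset.card_le_card_of_injOn a
    (s := univ.filter (fun i => a i < a j))
    (t := Finset.range (a j))
    (by intro k hk; simp only [Finset.mem_coe, mem_filter, mem_univ, true_and] at hk; simp [hk])
    (by intro k₁ h₁ k₂ h₂ hv; exact hinj hv)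
  simpa [rnk] using this

private lemma phi_bound {a : Fin m → ℕ} (hinj : Injective a) (ha : ∀ k, a k < N)
    (hm : m ≤ N) (j : Fin m) :
    a j - rnk a j < N + 1 - m := by
  have hup := Finset.card_le_card_of_injOn a
    (s := univ.filter (fun i => a j < a i))
    (t := Finset.Ioo (a j) N)
    (by intro k hk; simp only [Finset.mem_coe, mem_filter, mem_univ, true_and] at hk
        have := ha k; simp only [Finset.mem_coe, Finset.mem_Ioo]; omega)
    (by intro k₁ h₁ k₂ h₂ hv; exact hinj hv)
  rw [Nat.card_Ioo] at hup
  have hpart : rnk a j + (univ.filter (fun i => a j < a i)).card + 1 = m := by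
    have hun : (univ.filter (fun i => a i < a j)) ∪ (univ.filter (fun i => a j < a i))
        = univ.erase j := by
      ext k
      simp only [mem_union, mem_filter, mem_univ, true_and, Finset.mem_erase, and_true]
      constructor
      · intro h hkj; subst hkj; omega
      · intro h
        have : a k ≠ a j := fun hv => h (hinj hv)
        omega
    have hdisj : Disjoint (univ.filter (fun i => a i < a j))
        (univ.filter (fun i => a j < a i)) := by
      rw [Finset.disjoint_left]
      intro k hk hk'
      simp only [mem_filter, mem_univ, true_and] at hk hk'
      omega
    have hcu := Finset.card_union_of_disjoint hdisj
    rw [hun, Finset.card_erase_of_mem (mem_univ j), Finset.card_univ, Fintype.card_fin] at hcu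
    have hjm : 0 < m := j.pos
    unfold rnk
    omega
  have := ha j
  omega

private lemma phi_lt_iff (a : Fin m → ℕ) (hinj : Injective a)
    (hcond : ∀ i j : Fin m, i < j → a j ≠ a i + 1) (k w : Fin m) :
    (a k - rnk a k < a w - rnk a w ∨
      (a k - rnk a k = a w - rnk a w ∧ (w : ℕ) < (k : ℕ)))
    ↔ a k < a w := by
  have aux : ∀ k w : Fin m, a k < a w →
      (a k - rnk a k < a w - rnk a w ∨
        (a k - rnk a k = a w - rnk a w ∧ (w : ℕ) < (k : ℕ))) := by
    intro k w hlt
    have hsplit := rnk_split (a := a) (i := k) (j := w) (le_of_lt hlt)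
    have hT := midcard_le hinj k w
    have h1 := rnk_le hinj k
    have h2 := rnk_le hinj w
    by_cases heq : a k - rnk a k = a w - rnk a w
    · right
      refine ⟨heq, ?_⟩
      have hfullc : (univ.filter (fun x => a k ≤ a x ∧ a x < a w)).card = a w - a k := by omega
      have hfull := midcard_full hinj hfullc
      have := chainA a hinj hcond (a w - a k) k w rfl hlt hfull
      exact Fin.lt_def.mp this
    · left; omega
  constructor
  · intro h
    by_contra hn
    push_neg at hn
    rcases eq_or_lt_of_le hn with heq | hlt
    · have : w = k := hinj heq
      subst this
      omega
    · have := aux w k hlt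
      omega
  · exact aux k w

private lemma psi_lt_iff (b : Fin m → ℕ) (k w : Fin m) :
    (b k < b w ∨ (b k = b w ∧ (w : ℕ) < (k : ℕ)))
    ↔ b k + qrk b k < b w + qrk b w := by
  have fwd : ∀ k w : Fin m,
      (b k < b w ∨ (b k = b w ∧ (w : ℕ) < (k : ℕ))) →
      b k + qrk b k < b w + qrk b w := by
    intro k w h
    have := qrk_lt_qrk h
    omega
  constructor
  · exact fwd k w
  · intro h
    by_cases hkw : k = w
    · subst hkw; omega
    · have hne : (k : ℕ) ≠ (w : ℕ) := fun hv => hkw (Fin.ext hv)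
      by_contra hn
      have hrel : b w < b k ∨ (b w = b k ∧ (k : ℕ) < (w : ℕ)) := by omega
      have := fwd w k hrel
      omega

private lemma psi_bound (hm : m ≤ N) (b : Fin m → Fin (N + 1 - m)) (j : Fin m) :
    (b j : ℕ) + qrk (fun t => ((b t : ℕ))) j < N := by
  have h1 := qrk_lt_m (fun t => ((b t : ℕ))) j
  have h2 := (b j).isLt
  have h3 := j.pos
  omega

private lemma phi_bound' {a : Fin m → Fin N}
    (ha : a ∈ univ.filter (fun a : Fin m → Fin N =>
      Injective a ∧ ∀ i j : Fin m, i < j → (a j : ℕ) ≠ (a i : ℕ) + 1))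
    (hm : m ≤ N) (j : Fin m) :
    (a j : ℕ) - rnk (fun t => ((a t : ℕ))) j < N + 1 - m := by
  have hmem := Finset.mem_filter.mp ha
  have hinj : Injective (fun t => ((a t : ℕ))) := fun i j h => hmem.2.1 (Fin.ext h)
  exact phi_bound hinj (fun k => (a k).isLt) hm j

private lemma core_count (N m : ℕ) (hm : m ≤ N) :
    (univ.filter (fun a : Fin m → Fin N =>
      Injective a ∧ ∀ i j : Fin m, i < j → (a j : ℕ) ≠ (a i : ℕ) + 1)).card
    = (N + 1 - m) ^ m := by
  have htarget : (univ : Finset (Fin m → Fin (N + 1 - m))).card = (N + 1 - m) ^ m := by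
    rw [Finset.card_univ, Fintype.card_fun, Fintype.card_fin, Fintype.card_fin]
  rw [← htarget]
  refine Finset.card_bij'
    (fun a ha => fun j =>
      (⟨(a j : ℕ) - rnk (fun t => (a t : ℕ)) j, phi_bound' ha hm j⟩ : Fin (N + 1 - m)))
    (fun b hb => fun j =>
      (⟨(b j : ℕ) + qrk (fun t => (b t : ℕ)) j, psi_bound hm b j⟩ : Fin N))
    ?_ ?_ ?_ ?_
  · intro a ha
    exact mem_univ _
  · -- Ψ lands in the filter
    intro b hb
    rw [Finset.mem_filter]
    refine ⟨mem_univ _, ?_, ?_⟩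
    · intro k w h
      have hv : (b k : ℕ) + qrk (fun t => ((b t : ℕ))) k
          = (b w : ℕ) + qrk (fun t => ((b t : ℕ))) w := congrArg Fin.val h
      clear h
      by_contra hkw
      have hne : (k : ℕ) ≠ (w : ℕ) := fun hvv => hkw (Fin.ext hvv)
      rcases Nat.lt_trichotomy ((b k : ℕ)) ((b w : ℕ)) with h1 | h1 | h1
      · have := (psi_lt_iff (fun t => ((b t : ℕ))) k w).mp (Or.inl h1); omega
      · rcases Nat.lt_or_ge (k : ℕ) (w : ℕ) with h3 | h3
        · have := (psi_lt_iff (fun t => ((b t : ℕ))) w k).mp (Or.inr ⟨h1.symm, h3⟩); omega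
        · have := (psi_lt_iff (fun t => ((b t : ℕ))) k w).mp (Or.inr ⟨h1, by omega⟩); omega
      · have := (psi_lt_iff (fun t => ((b t : ℕ))) w k).mp (Or.inl h1); omega
    · intro i j hij hval
      have hval' : (b j : ℕ) + qrk (fun t => ((b t : ℕ))) j
          = (b i : ℕ) + qrk (fun t => ((b t : ℕ))) i + 1 := hval
      clear hval
      have hij' : (i : ℕ) < (j : ℕ) := hij
      have hrel := (psi_lt_iff (fun t => ((b t : ℕ))) i j).mpr (by omega)
      rcases hrel with h1 | h1
      · have := qrk_lt_qrk (b := (fun t => ((b t : ℕ)))) (i := i) (j := j) (Or.inl h1)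
        omega
      · omega
  · -- left inverse
    intro a ha
    have hmem := Finset.mem_filter.mp ha
    have hinj : Injective (fun t => ((a t : ℕ))) := fun i j h => hmem.2.1 (Fin.ext h)
    have hcond : ∀ i j : Fin m, i < j → (a j : ℕ) ≠ (a i : ℕ) + 1 := hmem.2.2
    have hA : True := trivial
    funext w
    apply Fin.ext
    show ((a w : ℕ) - rnk (fun t => ((a t : ℕ))) w)
        + qrk (fun t => (a t : ℕ) - rnk (fun t' => ((a t' : ℕ))) t) w = (a w : ℕ)
    have hq : qrk (fun t => (a t : ℕ) - rnk (fun t' => ((a t' : ℕ))) t) w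
        = rnk (fun t => ((a t : ℕ))) w := by
      unfold qrk rnk
      congr 1
      ext k
      simp only [mem_filter, mem_univ, true_and]
      exact phi_lt_iff (fun t => ((a t : ℕ))) hinj hcond k w
    rw [hq]
    have := rnk_le hinj w
    omega
  · -- right inverse
    intro b hb
    funext w
    apply Fin.ext
    show ((b w : ℕ) + qrk (fun t => ((b t : ℕ))) w)
        - rnk (fun t => (b t : ℕ) + qrk (fun t' => ((b t' : ℕ))) t) w = (b w : ℕ)
    have hq : rnk (fun t => (b t : ℕ) + qrk (fun t' => ((b t' : ℕ))) t) w
        = qrk (fun t => ((b t : ℕ))) w := by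
      unfold rnk qrk
      congr 1
      ext k
      simp only [mem_filter, mem_univ, true_and]
      exact (psi_lt_iff (fun t => ((b t : ℕ))) k w).symm
    rw [hq]
    omega

end Core

section StageB

private lemma valsub_bound {p : ℕ} [NeZero p] (h2p : 2 < p) (x : ZMod p) :
    x.val - 2 < p - 2 := by
  have := ZMod.val_lt x
  omega

private lemma stageB (p n : ℕ) (hp : p.Prime) [NeZero p] (hn : 2 ≤ n) (hpn : n < p) :
    (univ.filter (fun a : Fin (n - 1) → ZMod p =>
      (∀ j, a j ≠ 0 ∧ a j ≠ 1) ∧ Injective a ∧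
      ∀ i j : Fin (n - 1), i < j → a j ≠ a i + 1)).card = (p - n) ^ (n - 1) := by
  have h2p : 2 < p := lt_of_le_of_lt hn hpn
  haveI : Fact (1 < p) := ⟨by omega⟩
  have hval2 : ∀ (a : Fin (n - 1) → ZMod p), (∀ j, a j ≠ 0 ∧ a j ≠ 1) →
      ∀ j, 2 ≤ (a j).val := by
    intro a ha j
    have h0 : (a j).val ≠ 0 := fun h => (ha j).1 ((ZMod.val_eq_zero (a j)).mp h)
    have h1 : (a j).val ≠ 1 := by
      intro h
      apply (ha j).2
      apply ZMod.val_injective p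
      rw [h, ZMod.val_one]
    omega
  have hvalb : ∀ (b : Fin (n - 1) → Fin (p - 2)) (j : Fin (n - 1)),
      ((((b j : ℕ) + 2 : ℕ) : ZMod p)).val = (b j : ℕ) + 2 := by
    intro b j
    apply ZMod.val_cast_of_lt
    have := (b j).isLt
    omega
  have hmn : n - 1 ≤ p - 2 := by omega
  have harith : (p - 2) + 1 - (n - 1) = p - n := by omega
  have hcore := core_count (p - 2) (n - 1) hmn
  rw [harith] at hcore
  rw [← hcore]
  clear hcore harith hmn
  refine Finset.card_bij'
    (fun a ha => fun j => (⟨(a j).val - 2, valsub_bound h2p (a j)⟩ : Fin (p - 2)))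
    (fun b hb => fun j => (((b j : ℕ) + 2 : ℕ) : ZMod p))
    ?_ ?_ ?_ ?_
  · -- forward membership
    intro a ha
    obtain ⟨-, hne, hinj, hcond⟩ := Finset.mem_filter.mp ha
    have h2 := hval2 a hne
    refine Finset.mem_filter.mpr ⟨mem_univ _, ?_, ?_⟩
    · intro i j h
      have hv : (a i).val - 2 = (a j).val - 2 := congrArg Fin.val h
      clear h
      have hv' : (a i).val = (a j).val := by have := h2 i; have := h2 j; omega
      exact hinj (ZMod.val_injective p hv')
    · intro i j hij hval
      have hval' : (a j).val - 2 = ((a i).val - 2) + 1 := hval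
      clear hval
      have hv : (a j).val = (a i).val + 1 := by have := h2 i; have := h2 j; omega
      apply hcond i j hij
      calc a j = (((a j).val : ℕ) : ZMod p) := (ZMod.natCast_rightInverse (a j)).symm
        _ = (((a i).val + 1 : ℕ) : ZMod p) := by rw [hv]
        _ = a i + 1 := by
            push_cast
            rw [ZMod.natCast_rightInverse (a i)]
  · -- backward membership
    intro b hb
    obtain ⟨-, hinj, hcond⟩ := Finset.mem_filter.mp hb
    refine Finset.mem_filter.mpr ⟨mem_univ _, ?_, ?_, ?_⟩
    · intro j
      constructor
      · intro h
        have h' : ((((b j : ℕ) + 2 : ℕ)) : ZMod p) = 0 := h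
        clear h
        have hv := hvalb b j
        rw [h', ZMod.val_zero] at hv
        omega
      · intro h
        have h' : ((((b j : ℕ) + 2 : ℕ)) : ZMod p) = 1 := h
        clear h
        have hv := hvalb b j
        rw [h', ZMod.val_one] at hv
        omega
    · intro i j h
      have h' : ((((b i : ℕ) + 2 : ℕ)) : ZMod p) = ((((b j : ℕ) + 2 : ℕ)) : ZMod p) := h
      clear h
      have hv := congrArg ZMod.val h'
      rw [hvalb b i, hvalb b j] at hv
      exact hinj (Fin.ext (show ((b i : ℕ) : ℕ) = (b j : ℕ) by omega))
    · intro i j hij h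
      have h' : ((((b j : ℕ) + 2 : ℕ)) : ZMod p)
          = ((((b i : ℕ) + 2 : ℕ)) : ZMod p) + 1 := h
      clear h
      rcases Nat.lt_or_ge ((b i : ℕ) + 3) p with hlt | hge
      · have hcast : ((((b i : ℕ) + 2 : ℕ) : ZMod p)) + 1 = (((b i : ℕ) + 3 : ℕ) : ZMod p) := by
          push_cast; ring
        rw [hcast] at h'
        have hv := congrArg ZMod.val h'
        rw [hvalb b j, ZMod.val_cast_of_lt hlt] at hv
        exact hcond i j hij (show ((b j : ℕ) : ℕ) = (b i : ℕ) + 1 by omega)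
      · have h3 : (b i : ℕ) + 3 = p := by have := (b i).isLt; omega
        have hcast : ((((b i : ℕ) + 2 : ℕ) : ZMod p)) + 1 = 0 := by
          have hz : ((((b i : ℕ) + 3 : ℕ) : ZMod p)) = 0 := by
            rw [h3]; exact ZMod.natCast_self p
          push_cast at hz ⊢
          linear_combination hz
        rw [hcast] at h'
        have hv := congrArg ZMod.val h'
        rw [hvalb b j, ZMod.val_zero] at hv
        omega
  · -- left inverse
    intro a ha
    obtain ⟨-, hne, -, -⟩ := Finset.mem_filter.mp ha
    have h2 := hval2 a hne
    funext j
    show ((((a j).val - 2) + 2 : ℕ) : ZMod p) = a j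
    rw [Nat.sub_add_cancel (h2 j)]
    exact ZMod.natCast_rightInverse (a j)
  · -- right inverse
    intro b hb
    funext j
    apply Fin.ext
    show ((((b j : ℕ) + 2 : ℕ) : ZMod p)).val - 2 = (b j : ℕ)
    rw [hvalb b j]
    omega

end StageB

theorem stmt_1 (p n : ℕ) (hp : p.Prime) [NeZero p] (hn : 2 ≤ n) (hpn : n < p) :
    (Finset.univ.filter (fun x : Fin n → ZMod p =>
      (∀ i, x i ≠ 0) ∧
      (∀ i1 i2 : Fin n, i1 < i2 → x i1 ≠ x i2) ∧
      (∀ i1 i2 : Fin n, i1 ≤ i2 → (i2 : ℕ) < n - 1 →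
        x ⟨n - 1, by omega⟩ - x i2 + x i1 ≠ 0))).card
      = (p - 1) * (p - n) ^ (n - 1) := by
  haveI : Fact p.Prime := ⟨hp⟩
  have h2p : 2 < p := lt_of_le_of_lt hn hpn
  haveI : Fact (1 < p) := ⟨by omega⟩
  have hlast : n - 1 < n := by omega
  have hle : n - 1 ≤ n := by omega
  have hB := stageB p n hp hn hpn
  have hcard0 : (univ.filter (fun t : ZMod p => t ≠ 0)).card = p - 1 := by
    rw [Finset.filter_ne', Finset.card_erase_of_mem (Finset.mem_univ _),
      Finset.card_univ, ZMod.card]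
  rw [← hcard0, ← hB, ← Finset.card_product]
  clear hB hcard0
  refine Finset.card_bij'
    (fun x hx => (x ⟨n - 1, hlast⟩,
      fun j => x (Fin.castLE hle j) * (x ⟨n - 1, hlast⟩)⁻¹))
    (fun tb hb => fun i =>
      if h : (i : ℕ) < n - 1 then tb.2 ⟨(i : ℕ), h⟩ * tb.1 else tb.1)
    ?_ ?_ ?_ ?_
  · -- forward membership
    intro x hx
    obtain ⟨-, h1, h2, h3⟩ := Finset.mem_filter.mp hx
    have ht : x ⟨n - 1, hlast⟩ ≠ 0 := h1 _
    have hxinj : ∀ i1 i2 : Fin n, x i1 = x i2 → i1 = i2 := by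
      intro i1 i2 h
      by_contra hne
      rcases lt_or_gt_of_ne hne with hlt | hlt
      · exact h2 _ _ hlt h
      · exact h2 _ _ hlt h.symm
    refine Finset.mk_mem_product (Finset.mem_filter.mpr ⟨mem_univ _, ht⟩)
      (Finset.mem_filter.mpr ⟨mem_univ _, ?_, ?_, ?_⟩)
    · intro j
      have hcl : Fin.castLE hle j < (⟨n - 1, hlast⟩ : Fin n) := by
        rw [Fin.lt_def]; simpa using j.isLt
      refine ⟨mul_ne_zero (h1 _) (inv_ne_zero ht), ?_⟩
      intro heq
      exact h2 _ _ hcl ((mul_inv_eq_one₀ ht).mp heq)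
    · intro j1 j2 h
      have h' := mul_right_cancel₀ (inv_ne_zero ht) h
      exact Fin.castLE_injective hle (hxinj _ _ h')
    · intro i j hij heq
      have heqb : x (Fin.castLE hle j) * (x ⟨n - 1, hlast⟩)⁻¹
          = x (Fin.castLE hle i) * (x ⟨n - 1, hlast⟩)⁻¹ + 1 := heq
      have hx' : x (Fin.castLE hle j) = x (Fin.castLE hle i) + x ⟨n - 1, hlast⟩ := by
        have h' : x (Fin.castLE hle j) * (x ⟨n - 1, hlast⟩)⁻¹ * x ⟨n - 1, hlast⟩
            = (x (Fin.castLE hle i) * (x ⟨n - 1, hlast⟩)⁻¹ + 1) * x ⟨n - 1, hlast⟩ := by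
          rw [heqb]
        rwa [inv_mul_cancel_right₀ ht, add_mul, one_mul,
          inv_mul_cancel_right₀ ht] at h'
      have hle' : Fin.castLE hle i ≤ Fin.castLE hle j := by
        rw [Fin.le_def]; simpa using le_of_lt hij
      have hlt' : ((Fin.castLE hle j : Fin n) : ℕ) < n - 1 := by simpa using j.isLt
      exact h3 _ _ hle' hlt' (by rw [hx']; ring)
  · -- backward membership
    intro tb hb
    obtain ⟨t, a⟩ := tb
    rw [Finset.mem_product] at hb
    obtain ⟨hbt, hba⟩ := hb
    have ht : t ≠ 0 := (Finset.mem_filter.mp hbt).2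
    obtain ⟨-, hne, hinj, hcond⟩ := Finset.mem_filter.mp hba
    refine Finset.mem_filter.mpr ⟨mem_univ _, ?_, ?_, ?_⟩
    · intro i
      by_cases h : (i : ℕ) < n - 1
      · show (if h' : (i : ℕ) < n - 1 then a ⟨(i : ℕ), h'⟩ * t else t) ≠ 0
        rw [dif_pos h]
        exact mul_ne_zero (hne _).1 ht
      · show (if h' : (i : ℕ) < n - 1 then a ⟨(i : ℕ), h'⟩ * t else t) ≠ 0
        rw [dif_neg h]
        exact ht
    · intro i1 i2 h12 heq
      have hv12 : (i1 : ℕ) < (i2 : ℕ) := h12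
      by_cases h : (i2 : ℕ) < n - 1
      · have h1' : (i1 : ℕ) < n - 1 := by omega
        have heqb : (if h' : (i1 : ℕ) < n - 1 then a ⟨(i1 : ℕ), h'⟩ * t else t)
            = (if h' : (i2 : ℕ) < n - 1 then a ⟨(i2 : ℕ), h'⟩ * t else t) := heq
        rw [dif_pos h1', dif_pos h] at heqb
        have hmk := hinj (mul_right_cancel₀ ht heqb)
        have hv : (i1 : ℕ) = (i2 : ℕ) := by simpa using congrArg Fin.val hmk
        omega
      · have h1' : (i1 : ℕ) < n - 1 := by have := i2.isLt; omega
        have heqb : (if h' : (i1 : ℕ) < n - 1 then a ⟨(i1 : ℕ), h'⟩ * t else t)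
            = (if h' : (i2 : ℕ) < n - 1 then a ⟨(i2 : ℕ), h'⟩ * t else t) := heq
        rw [dif_pos h1', dif_neg h] at heqb
        apply (hne ⟨(i1 : ℕ), h1'⟩).2
        have hone : a ⟨(i1 : ℕ), h1'⟩ * t = 1 * t := by rw [one_mul]; exact heqb
        exact mul_right_cancel₀ ht hone
    · intro i1 i2 h12 hlt2 heq
      have h1' : (i1 : ℕ) < n - 1 := by have : (i1 : ℕ) ≤ (i2 : ℕ) := h12; omega
      have heqb : (if h' : (n - 1 : ℕ) < n - 1 then a ⟨(n - 1 : ℕ), h'⟩ * t else t)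
          - (if h' : (i2 : ℕ) < n - 1 then a ⟨(i2 : ℕ), h'⟩ * t else t)
          + (if h' : (i1 : ℕ) < n - 1 then a ⟨(i1 : ℕ), h'⟩ * t else t) = 0 := heq
      rw [dif_neg (lt_irrefl _), dif_pos hlt2, dif_pos h1'] at heqb
      have heq' : t - a ⟨(i2 : ℕ), hlt2⟩ * t + a ⟨(i1 : ℕ), h1'⟩ * t = 0 := heqb
      have hfac : (1 - a ⟨(i2 : ℕ), hlt2⟩ + a ⟨(i1 : ℕ), h1'⟩) * t = 0 := by
        linear_combination heq'
      rcases mul_eq_zero.mp hfac with hz | hz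
      · have ha21 : a ⟨(i2 : ℕ), hlt2⟩ = a ⟨(i1 : ℕ), h1'⟩ + 1 := by
          linear_combination -hz
        rcases eq_or_lt_of_le (show (i1 : ℕ) ≤ (i2 : ℕ) from h12) with hv | hv
        · have hmk : (⟨(i1 : ℕ), h1'⟩ : Fin (n - 1)) = ⟨(i2 : ℕ), hlt2⟩ := Fin.ext hv
          rw [hmk] at ha21
          exact one_ne_zero (show (1 : ZMod p) = 0 by linear_combination -ha21)
        · exact hcond _ _ (show (⟨(i1 : ℕ), h1'⟩ : Fin (n - 1)) < ⟨(i2 : ℕ), hlt2⟩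
            from hv) ha21
      · exact ht hz
  · -- left inverse
    intro x hx
    obtain ⟨-, h1, -, -⟩ := Finset.mem_filter.mp hx
    have ht : x ⟨n - 1, hlast⟩ ≠ 0 := h1 _
    funext i
    show (if h : (i : ℕ) < n - 1
        then x (Fin.castLE hle ⟨(i : ℕ), h⟩) * (x ⟨n - 1, hlast⟩)⁻¹ * x ⟨n - 1, hlast⟩
        else x ⟨n - 1, hlast⟩) = x i
    by_cases h : (i : ℕ) < n - 1
    · rw [dif_pos h, inv_mul_cancel_right₀ ht]
      exact congrArg x (Fin.ext (by simp))
    · rw [dif_neg h]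
      exact congrArg x (Fin.ext (by have := i.isLt; simp; omega))
  · -- right inverse
    intro tb hb
    obtain ⟨t, a⟩ := tb
    rw [Finset.mem_product] at hb
    have ht : t ≠ 0 := (Finset.mem_filter.mp hb.1).2
    refine Prod.ext ?_ ?_
    · show (if h : ((⟨n - 1, hlast⟩ : Fin n) : ℕ) < n - 1
          then a ⟨((⟨n - 1, hlast⟩ : Fin n) : ℕ), h⟩ * t else t) = t
      exact dif_neg (lt_irrefl _)
    · funext j
      have hc : ((Fin.castLE hle j : Fin n) : ℕ) < n - 1 := by simpa using j.isLt
      show (if h : ((Fin.castLE hle j : Fin n) : ℕ) < n - 1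
          then a ⟨((Fin.castLE hle j : Fin n) : ℕ), h⟩ * t else t)
          * (if h : (n - 1 : ℕ) < n - 1 then a ⟨(n - 1 : ℕ), h⟩ * t else t)⁻¹ = a j
      rw [dif_neg (lt_irrefl _), dif_pos hc, mul_inv_cancel_right₀ ht]
      exact congrArg a (Fin.ext (by simp))
end

section
/- Let p be an odd prime, n ≥ 2 with p > 2n - 1, and let k ∈ F_p, k ≠ 0. The number of vectors (x_1,...,x_{n-1}) ∈ F_p^{n-1} such that x_i ≠ 0 for all i, x_i ≠ k for all i, x_{i_1} ≠ x_{i_2} for all i_1 < i_2, x_{i_1} + x_{i_2} ≠ k for all i_1 < i_2, and additionally x_i ≠ k/2 for all i, equals (p-3)(p-5)(p-7)···(p-(2n-1)). -/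
open Finset

private lemma card_prod_filter {F G : Type*} [Fintype F] [Fintype G] [DecidableEq F]
    [DecidableEq G] (Q : F × G → Prop) [DecidablePred Q] :
    (Finset.univ.filter Q).card = ∑ a : F, (Finset.univ.filter fun y => Q (a, y)).card := by
  rw [Finset.card_eq_sum_card_fiberwise (f := Prod.fst) (t := Finset.univ)
    (fun x _ => Finset.mem_univ _)]
  refine Finset.sum_congr rfl fun a _ => ?_
  refine Finset.card_nbij' (fun q => q.2) (fun y => (a, y)) ?_ ?_ ?_ ?_
  · intro q hq
    simp only [Finset.mem_coe, Finset.mem_filter, Finset.mem_univ, true_and] at hq ⊢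
    have : (a, q.2) = q := Prod.ext hq.2.symm rfl
    rw [this]; exact hq.1
  · intro y hy
    simp only [Finset.mem_coe, Finset.mem_filter, Finset.mem_univ, true_and] at hy ⊢
    exact ⟨hy, trivial⟩
  · intro q hq
    simp only [Finset.mem_coe, Finset.mem_filter] at hq
    exact (Prod.ext hq.2.symm rfl)
  · intro y _; rfl

private lemma aux_count {F : Type*} [Field F] [Fintype F] [DecidableEq F] (k : F) :
    ∀ (m : ℕ) (T : Finset F), (∀ a ∈ T, k - a ∈ T) → (∀ a ∈ T, a + a ≠ k) →
    (Finset.univ.filter (fun x : Fin m → F =>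
       (∀ i, x i ∈ T) ∧ Function.Injective x ∧ ∀ i1 i2, x i1 + x i2 ≠ k)).card
     = ∏ j ∈ Finset.range m, (T.card - 2 * j) := by
  intro m
  induction m with
  | zero =>
    intro T hT hTk
    rw [Finset.filter_true_of_mem, Finset.prod_range_zero]
    · simp
    · intro x _
      exact ⟨fun i => i.elim0, fun i => i.elim0, fun i => i.elim0⟩
  | succ m ih =>
    intro T hT hTk
    have h2 : ∀ a ∈ T, k - a ≠ a := by
      intro a ha h
      exact hTk a ha (by linear_combination -h)
    -- transport along Fin.cons
    have hcard : (Finset.univ.filter (fun x : Fin (m+1) → F =>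
        (∀ i, x i ∈ T) ∧ Function.Injective x ∧ ∀ i1 i2, x i1 + x i2 ≠ k)).card
      = (Finset.univ.filter (fun q : F × (Fin m → F) =>
          (∀ i, (Fin.cons q.1 q.2 : Fin (m+1) → F) i ∈ T) ∧
          Function.Injective (Fin.cons q.1 q.2 : Fin (m+1) → F) ∧
          ∀ i1 i2, (Fin.cons q.1 q.2 : Fin (m+1) → F) i1 +
            (Fin.cons q.1 q.2 : Fin (m+1) → F) i2 ≠ k)).card := by
      refine Finset.card_equiv (Fin.consEquiv (fun _ => F)).symm ?_
      intro x
      have hx : (Fin.cons ((Fin.consEquiv (fun _ : Fin (m+1) => F)).symm x).1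
          ((Fin.consEquiv (fun _ : Fin (m+1) => F)).symm x).2 : Fin (m+1) → F) = x := by
        exact (Fin.consEquiv (fun _ : Fin (m+1) => F)).apply_symm_apply x
      simp only [Finset.mem_filter, Finset.mem_univ, true_and, hx]
    rw [hcard, card_prod_filter]
    clear hcard
    -- kill terms outside T
    rw [← Finset.sum_subset (Finset.subset_univ T) (by
      intro a _ ha
      rw [Finset.card_eq_zero, Finset.filter_eq_empty_iff]
      intro y _
      intro hy
      exact ha (by simpa using hy.1 0))]
    have key : ∀ a ∈ T,
        (Finset.univ.filter (fun y : Fin m → F =>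
          (∀ i, (Fin.cons a y : Fin (m+1) → F) i ∈ T) ∧
          Function.Injective (Fin.cons a y : Fin (m+1) → F) ∧
          ∀ i1 i2, (Fin.cons a y : Fin (m+1) → F) i1 +
            (Fin.cons a y : Fin (m+1) → F) i2 ≠ k)).card
        = ∏ j ∈ Finset.range m, (T.card - 2 - 2 * j) := by
      intro a ha
      set T' : Finset F := (T.erase a).erase (k - a) with hT'def
      have hkaT : k - a ∈ T.erase a := Finset.mem_erase.2 ⟨h2 a ha, hT a ha⟩
      have hT'card : T'.card = T.card - 2 := by
        rw [hT'def, Finset.card_erase_of_mem hkaT, Finset.card_erase_of_mem ha]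
        omega
      have hmemT' : ∀ b, b ∈ T' ↔ b ≠ k - a ∧ b ≠ a ∧ b ∈ T := by
        intro b; simp [hT'def, Finset.mem_erase, and_assoc]
      have hclos : ∀ b ∈ T', k - b ∈ T' := by
        intro b hb
        rw [hmemT'] at hb ⊢
        obtain ⟨h1, h2', h3⟩ := hb
        refine ⟨?_, ?_, hT b h3⟩
        · intro h; exact h2' (by linear_combination -h)
        · intro h; exact h1 (by linear_combination -h)
      have hdiag : ∀ b ∈ T', b + b ≠ k := by
        intro b hb; exact hTk b ((hmemT' b).1 hb).2.2
      have hequiv : ∀ y : Fin m → F,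
          ((∀ i, (Fin.cons a y : Fin (m+1) → F) i ∈ T) ∧
          Function.Injective (Fin.cons a y : Fin (m+1) → F) ∧
          ∀ i1 i2, (Fin.cons a y : Fin (m+1) → F) i1 +
            (Fin.cons a y : Fin (m+1) → F) i2 ≠ k)
          ↔ ((∀ i, y i ∈ T') ∧ Function.Injective y ∧ ∀ i1 i2, y i1 + y i2 ≠ k) := by
        intro y
        constructor
        · rintro ⟨hmem, hinj, hsum⟩
          have hinj' : Function.Injective y := by
            rw [Fin.cons_injective_iff] at hinj
            exact hinj.2
          have hrange : a ∉ Set.range y := by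
            rw [Fin.cons_injective_iff] at hinj
            exact hinj.1
          refine ⟨fun i => ?_, hinj', fun i1 i2 => by
            have := hsum i1.succ i2.succ; simpa using this⟩
          rw [hmemT']
          refine ⟨?_, ?_, by simpa using hmem i.succ⟩
          · intro h
            have := hsum 0 i.succ
            simp only [Fin.cons_zero, Fin.cons_succ] at this
            exact this (by linear_combination h)
          · intro h
            exact hrange ⟨i, h⟩
        · rintro ⟨hmem, hinj, hsum⟩
          have hmem' := fun i => (hmemT' (y i)).1 (hmem i)
          refine ⟨?_, ?_, ?_⟩
          · intro i
            refine Fin.cases ?_ ?_ i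
            · simpa using ha
            · intro j; simpa using (hmem' j).2.2
          · rw [Fin.cons_injective_iff]
            refine ⟨?_, hinj⟩
            rintro ⟨i, hi⟩
            exact (hmem' i).2.1 hi
          · intro i1 i2
            refine Fin.cases ?_ ?_ i1 <;> [skip; intro j1] <;>
              refine Fin.cases ?_ ?_ i2
            · simpa using hTk a ha
            · intro j2
              simp only [Fin.cons_zero, Fin.cons_succ]
              intro h
              exact (hmem' j2).1 (by linear_combination h)
            · simp only [Fin.cons_zero, Fin.cons_succ]
              intro h
              exact (hmem' j1).1 (by linear_combination h)
            · intro j2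
              simpa using hsum j1 j2
      rw [show (Finset.univ.filter (fun y : Fin m → F =>
          (∀ i, (Fin.cons a y : Fin (m+1) → F) i ∈ T) ∧
          Function.Injective (Fin.cons a y : Fin (m+1) → F) ∧
          ∀ i1 i2, (Fin.cons a y : Fin (m+1) → F) i1 +
            (Fin.cons a y : Fin (m+1) → F) i2 ≠ k))
        = Finset.univ.filter (fun y : Fin m → F =>
          (∀ i, y i ∈ T') ∧ Function.Injective y ∧ ∀ i1 i2, y i1 + y i2 ≠ k) from
        Finset.filter_congr (fun y _ => by simp only [hequiv y])]
      rw [ih T' hclos hdiag, hT'card]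
    rw [Finset.sum_congr rfl key, Finset.sum_const, smul_eq_mul,
      Finset.prod_range_succ']
    rw [show T.card - 2 * 0 = T.card from by omega, mul_comm]
    congr 1
    exact Finset.prod_congr rfl fun j _ => by omega

theorem stmt_3 (p n : ℕ) [Fact p.Prime] (hodd : Odd p) (hn : 2 ≤ n)
    (hpn : 2 * n - 1 < p) (k : ZMod p) (hk : k ≠ 0) :
    (Finset.univ.filter (fun x : Fin (n - 1) → ZMod p =>
      (∀ i, x i ≠ 0) ∧ (∀ i, x i ≠ k) ∧
      (∀ i1 i2 : Fin (n - 1), i1 < i2 → x i1 ≠ x i2) ∧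
      (∀ i1 i2 : Fin (n - 1), i1 < i2 → x i1 + x i2 ≠ k) ∧
      (∀ i, x i ≠ k / (2 : ZMod p)))).card
      = ∏ j ∈ Finset.range (n - 1), (p - (2 * j + 3)) := by
  have hp : p.Prime := Fact.out
  have hp2 : p ≠ 2 := by rintro rfl; simp [Nat.odd_iff] at hodd
  have h2 : (2 : ZMod p) ≠ 0 := by
    have : ((2 : ℕ) : ZMod p) ≠ 0 := by
      rw [Ne, ZMod.natCast_eq_zero_iff]
      intro h
      exact hp2 ((Nat.prime_dvd_prime_iff_eq hp Nat.prime_two).1 h)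
    simpa using this
  have hhalf : k / 2 + k / 2 = k := by
    field_simp
    ring
  have hinv : (2 : ZMod p) * 2⁻¹ = 1 := mul_inv_cancel₀ h2
  have hk2 : k / 2 ≠ 0 := div_ne_zero hk h2
  have hkk : k / 2 ≠ k := by
    intro h
    exact hk (by linear_combination hhalf - 2 * h)
  set T : Finset (ZMod p) :=
    Finset.univ.filter (fun a => a ≠ 0 ∧ a ≠ k ∧ a ≠ k / 2) with hTdef
  have hmemT : ∀ a, a ∈ T ↔ a ≠ 0 ∧ a ≠ k ∧ a ≠ k / 2 := by
    intro a; simp [hTdef]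
  have hclos : ∀ a ∈ T, k - a ∈ T := by
    intro a ha
    rw [hmemT] at ha ⊢
    obtain ⟨h1, h2', h3⟩ := ha
    refine ⟨?_, ?_, ?_⟩
    · intro h; exact h2' (by linear_combination -h)
    · intro h; exact h1 (by linear_combination -h)
    · intro h; exact h3 (by linear_combination -hhalf - h)
  have hdiag : ∀ a ∈ T, a + a ≠ k := by
    intro a ha h
    exact ((hmemT a).1 ha).2.2 (by linear_combination 2⁻¹ * h - a * hinv)
  have hTcard : T.card = p - 3 := by
    have hTs : T = Finset.univ \ {0, k, k / 2} := by
      ext a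
      simp only [hTdef, Finset.mem_filter, Finset.mem_univ, true_and,
        Finset.mem_sdiff, Finset.mem_insert, Finset.mem_singleton]
      push_neg
      tauto
    rw [hTs, Finset.card_sdiff_of_subset (Finset.subset_univ _), Finset.card_univ, ZMod.card]
    congr 1
    rw [Finset.card_insert_of_notMem (by simp [Ne.symm hk, Ne.symm hk2]),
      Finset.card_insert_of_notMem (by simp [Ne.symm hkk]), Finset.card_singleton]
  have heq : (Finset.univ.filter (fun x : Fin (n - 1) → ZMod p =>
      (∀ i, x i ≠ 0) ∧ (∀ i, x i ≠ k) ∧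
      (∀ i1 i2 : Fin (n - 1), i1 < i2 → x i1 ≠ x i2) ∧
      (∀ i1 i2 : Fin (n - 1), i1 < i2 → x i1 + x i2 ≠ k) ∧
      (∀ i, x i ≠ k / (2 : ZMod p))))
    = Finset.univ.filter (fun x : Fin (n - 1) → ZMod p =>
      (∀ i, x i ∈ T) ∧ Function.Injective x ∧ ∀ i1 i2, x i1 + x i2 ≠ k) := by
    refine Finset.filter_congr fun x _ => ?_
    constructor
    · rintro ⟨h0, hkx, hne, hsum, hh⟩
      refine ⟨fun i => (hmemT _).2 ⟨h0 i, hkx i, hh i⟩, ?_, ?_⟩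
      · intro i j hij
        rcases lt_trichotomy i j with h | h | h
        · exact absurd hij (hne i j h)
        · exact h
        · exact absurd hij.symm (hne j i h)
      · intro i1 i2
        rcases lt_trichotomy i1 i2 with h | h | h
        · exact hsum i1 i2 h
        · subst h
          intro hc
          exact hh i1 (by linear_combination 2⁻¹ * hc - (x i1) * hinv)
        · intro hc
          exact hsum i2 i1 h (by linear_combination hc)
    · rintro ⟨hmem, hinj, hsum⟩
      have h' := fun i => (hmemT (x i)).1 (hmem i)
      exact ⟨fun i => (h' i).1, fun i => (h' i).2.1,
        fun i1 i2 h hc => (h.ne) (hinj hc),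
        fun i1 i2 _ => hsum i1 i2, fun i => (h' i).2.2⟩
  rw [heq, aux_count k (n - 1) T hclos hdiag, hTcard]
  exact Finset.prod_congr rfl fun j _ => by omega
end

section
/- Let p be an odd prime, n ≥ 2 with p > 2n - 1, and let k ∈ F_p, k ≠ 0. The number of vectors (x_1,...,x_{n-1}) ∈ F_p^{n-1} such that x_i ≠ 0, x_i ≠ k, all x_i pairwise distinct, and x_{i_1} + x_{i_2} ≠ k for all i_1 ≤ i_2 with i_1 < i_2, equals (p-3)(p-5)···(p-(2n-1)) + (n-1)(p-3)(p-5)···(p-(2n-3)). -/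
open Finset

def good {p : ℕ} [NeZero p] (k : ZMod p) (S : Finset (ZMod p)) (m : ℕ) :
    Finset (Fin m → ZMod p) :=
  univ.filter (fun x => (∀ i, x i ∈ S) ∧ ∀ i j : Fin m, i ≠ j → x i ≠ x j ∧ x i + x j ≠ k)

lemma mem_good {p : ℕ} [NeZero p] {k : ZMod p} {S : Finset (ZMod p)} {m : ℕ}
    {x : Fin m → ZMod p} :
    x ∈ good k S m ↔ (∀ i, x i ∈ S) ∧ ∀ i j : Fin m, i ≠ j → x i ≠ x j ∧ x i + x j ≠ k := by
  simp [good]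

lemma good_card {p : ℕ} [NeZero p] (k : ZMod p) (m : ℕ) :
    ∀ S : Finset (ZMod p), (∀ a ∈ S, k - a ∈ S) → (∀ a ∈ S, a + a ≠ k) →
    (good k S m).card = ∏ j ∈ Finset.range m, (S.card - 2 * j) := by
  induction m with
  | zero => intro S _ _; simp [good]
  | succ m ih =>
    intro S hcl hns
    have hfib : ∀ a ∈ S, ((good k S (m+1)).filter (fun x => x 0 = a)).card
        = (good k ((S.erase a).erase (k - a)) m).card := by
      intro a ha
      refine Finset.card_nbij' Fin.tail (fun y : Fin m → ZMod p => Fin.cons a y) ?_ ?_ ?_ ?_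
      · intro x hx
        rw [mem_coe, mem_filter, mem_good] at hx
        obtain ⟨⟨hS, hP⟩, h0⟩ := hx
        rw [mem_coe, mem_good]
        constructor
        · intro i
          have hne : (i.succ : Fin (m+1)) ≠ 0 := Fin.succ_ne_zero i
          have hre := hP i.succ 0 hne
          rw [h0] at hre
          refine Finset.mem_erase.2 ⟨?_, Finset.mem_erase.2 ⟨hre.1, hS i.succ⟩⟩
          intro hEq
          exact hre.2 (by rw [Fin.tail] at hEq; linear_combination hEq)
        · intro i j hij
          exact hP i.succ j.succ (fun hEq => hij (Fin.succ_injective _ hEq))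
      · intro y hy
        rw [mem_coe, mem_good] at hy
        obtain ⟨hS, hP⟩ := hy
        have hSy : ∀ i, y i ∈ S ∧ y i ≠ a ∧ y i ≠ k - a := by
          intro i
          have := hS i
          rw [Finset.mem_erase, Finset.mem_erase] at this
          exact ⟨this.2.2, this.2.1, this.1⟩
        rw [mem_coe, mem_filter, mem_good]
        refine ⟨⟨?_, ?_⟩, by simp⟩
        · intro i
          rcases Fin.eq_zero_or_eq_succ i with rfl | ⟨j, rfl⟩
          · simpa using ha
          · simpa using (hSy j).1
        · intro i j hij
          rcases Fin.eq_zero_or_eq_succ i with rfl | ⟨i', rfl⟩ <;>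
            rcases Fin.eq_zero_or_eq_succ j with rfl | ⟨j', rfl⟩
          · exact absurd rfl hij
          · simp only [Fin.cons_zero, Fin.cons_succ]
            exact ⟨fun hEq => (hSy j').2.1 hEq.symm,
              fun hEq => (hSy j').2.2 (by linear_combination hEq)⟩
          · simp only [Fin.cons_zero, Fin.cons_succ]
            exact ⟨(hSy i').2.1,
              fun hEq => (hSy i').2.2 (by linear_combination hEq)⟩
          · simp only [Fin.cons_succ]
            exact hP i' j' (fun hEq => hij (congrArg Fin.succ hEq))
      · intro x hx
        rw [mem_coe, mem_filter] at hx
        show Fin.cons a (Fin.tail x) = x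
        rw [← hx.2]
        exact Fin.cons_self_tail x
      · intro y _
        funext i
        simp [Fin.tail]
    have hcard : ∀ a ∈ S, ((S.erase a).erase (k - a)).card = S.card - 2 := by
      intro a ha
      have hne : k - a ≠ a := by
        intro hEq
        exact hns a ha (by linear_combination -hEq)
      rw [Finset.card_erase_of_mem (Finset.mem_erase.2 ⟨hne, hcl a ha⟩),
        Finset.card_erase_of_mem ha]
      omega
    have hmain : (good k S (m+1)).card
        = ∑ a ∈ S, (good k ((S.erase a).erase (k - a)) m).card := by
      rw [Finset.card_eq_sum_card_fiberwise (f := fun x => x 0) (t := S)]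
      · exact Finset.sum_congr rfl hfib
      · intro x hx
        exact (mem_good.1 hx).1 0
    rw [hmain]
    have hterm : ∀ a ∈ S, (good k ((S.erase a).erase (k - a)) m).card
        = ∏ j ∈ Finset.range m, (S.card - 2 - 2 * j) := by
      intro a ha
      rw [ih _ ?_ ?_, hcard a ha]
      · intro b hb
        rw [Finset.mem_erase, Finset.mem_erase] at hb ⊢
        refine ⟨?_, ?_, hcl b hb.2.2⟩
        · intro hEq; exact hb.2.1 (by linear_combination -hEq)
        · intro hEq; exact hb.1 (by linear_combination -hEq)
      · intro b hb
        rw [Finset.mem_erase, Finset.mem_erase] at hb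
        exact hns b hb.2.2
    rw [Finset.sum_congr rfl hterm, Finset.sum_const, smul_eq_mul,
      Finset.prod_range_succ']
    rw [Nat.mul_zero, Nat.sub_zero, mul_comm]
    congr 1
    exact Finset.prod_congr rfl fun j _ => by omega

theorem stmt_aux (p m : ℕ) (hp : p.Prime) [NeZero p] (hodd : Odd p)
    (hpn : 2 * (m + 2) - 1 < p) (k : ZMod p) (hk : k ≠ 0) :
    (Finset.univ.filter (fun x : Fin (m + 1) → ZMod p =>
      (∀ i, x i ≠ 0) ∧ (∀ i, x i ≠ k) ∧
      (∀ i1 i2 : Fin (m + 1), i1 < i2 → x i1 ≠ x i2) ∧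
      (∀ i1 i2 : Fin (m + 1), i1 < i2 → x i1 + x i2 ≠ k))).card
      = (∏ j ∈ Finset.range (m + 1), (p - (2 * j + 3)))
        + (m + 1) * ∏ j ∈ Finset.range m, (p - (2 * j + 3)) := by
  classical
  haveI : Fact p.Prime := ⟨hp⟩
  have hp2 : (2 : ZMod p) ≠ 0 := by
    intro h2
    have hdvd : (p : ℕ) ∣ 2 :=
      (ZMod.natCast_eq_zero_iff 2 p).1 (by exact_mod_cast h2)
    have hpe : p = 2 := (Nat.prime_dvd_prime_iff_eq hp Nat.prime_two).1 hdvd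
    exact absurd (hpe ▸ hodd) (by decide)
  set h : ZMod p := k * (2 : ZMod p)⁻¹ with hh
  have hhk : h + h = k := by
    rw [hh]
    field_simp
    ring
  have h0 : h ≠ 0 := by
    intro e
    apply hk
    rw [← hhk, e, add_zero]
  have hnek : h ≠ k := by
    intro e
    apply hk
    linear_combination hhk - 2 * e
  set S : Finset (ZMod p) := univ \ {0, k, h} with hSdef
  have hmemS : ∀ a : ZMod p, a ∈ S ↔ a ≠ 0 ∧ a ≠ k ∧ a ≠ h := by
    intro a
    simp [hSdef, not_or]
  have hScard : S.card = p - 3 := by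
    rw [hSdef, card_sdiff_of_subset (subset_univ _), card_univ, ZMod.card]
    congr 1
    rw [show ({0, k, h} : Finset (ZMod p)) = insert 0 (insert k {h}) from rfl,
      card_insert_of_notMem (by simp [Ne.symm hk, Ne.symm h0]),
      card_insert_of_notMem (by simp [Ne.symm hnek]), card_singleton]
  have hclos : ∀ a ∈ S, k - a ∈ S := by
    intro a ha
    rw [hmemS] at ha ⊢
    refine ⟨?_, ?_, ?_⟩
    · intro e; exact ha.2.1 (by linear_combination -e)
    · intro e; exact ha.1 (by linear_combination -e)
    · intro e; exact ha.2.2 (by linear_combination -e - hhk)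
  have hnosum : ∀ a ∈ S, a + a ≠ k := by
    intro a ha e
    have h2 : (2 : ZMod p) * (a - h) = 0 := by linear_combination e - hhk
    rcases mul_eq_zero.1 h2 with h' | h'
    · exact hp2 h'
    · exact ((hmemS a).1 ha).2.2 (by linear_combination h')
  have hbridge : ∀ {m' : ℕ} (x : Fin m' → ZMod p),
      ((∀ i1 i2, i1 < i2 → x i1 ≠ x i2) ∧ (∀ i1 i2, i1 < i2 → x i1 + x i2 ≠ k)) ↔
      (∀ i j, i ≠ j → x i ≠ x j ∧ x i + x j ≠ k) := by
    intro m' x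
    constructor
    · rintro ⟨hd, hs⟩ i j hij
      rcases hij.lt_or_gt with hl | hl
      · exact ⟨hd i j hl, hs i j hl⟩
      · exact ⟨Ne.symm (hd j i hl), by rw [add_comm]; exact hs j i hl⟩
    · intro hP
      exact ⟨fun i j hl => (hP i j hl.ne).1, fun i j hl => (hP i j hl.ne).2⟩
  set C : (Fin (m + 1) → ZMod p) → Prop := fun x =>
      (∀ i, x i ≠ 0) ∧ (∀ i, x i ≠ k) ∧
      (∀ i1 i2 : Fin (m + 1), i1 < i2 → x i1 ≠ x i2) ∧
      (∀ i1 i2 : Fin (m + 1), i1 < i2 → x i1 + x i2 ≠ k) with hC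
  have hCne : ∀ x, C x → ∀ i j : Fin (m+1), i ≠ j → x i ≠ x j ∧ x i + x j ≠ k := by
    intro x hx
    exact (hbridge x).1 ⟨hx.2.2.1, hx.2.2.2⟩
  rw [← Finset.card_filter_add_card_filter_not
    (p := fun x : Fin (m+1) → ZMod p => ∀ i, x i ≠ h) (s := univ.filter C)]
  have hc1 : (univ.filter C).filter (fun x : Fin (m+1) → ZMod p => ∀ i, x i ≠ h)
      = good k S (m+1) := by
    ext x
    simp only [mem_filter, mem_univ, true_and, good]
    constructor
    · rintro ⟨hx, h5⟩
      exact ⟨fun i => (hmemS _).2 ⟨hx.1 i, hx.2.1 i, h5 i⟩, hCne x hx⟩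
    · rintro ⟨hS', hP⟩
      have hm := fun i => (hmemS _).1 (hS' i)
      exact ⟨⟨fun i => (hm i).1, fun i => (hm i).2.1,
        ((hbridge x).2 hP).1, ((hbridge x).2 hP).2⟩, fun i => (hm i).2.2⟩
  have hc2 : (univ.filter C).filter (fun x : Fin (m+1) → ZMod p => ¬ ∀ i, x i ≠ h)
      = univ.biUnion (fun i0 : Fin (m+1) =>
          (univ.filter C).filter (fun x => x i0 = h)) := by
    ext x
    simp only [mem_filter, mem_biUnion, mem_univ, true_and]
    constructor
    · rintro ⟨hCx, hne⟩
      push_neg at hne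
      obtain ⟨i0, hi0⟩ := hne
      exact ⟨i0, hCx, hi0⟩
    · rintro ⟨i0, hCx, hEq⟩
      refine ⟨hCx, ?_⟩
      push_neg
      exact ⟨i0, hEq⟩
  have hdisj : ∀ i0 ∈ (univ : Finset (Fin (m+1))), ∀ i1 ∈ (univ : Finset (Fin (m+1))),
      i0 ≠ i1 → Disjoint ((univ.filter C).filter (fun x => x i0 = h))
        ((univ.filter C).filter (fun x => x i1 = h)) := by
    intro i0 _ i1 _ hne
    rw [Finset.disjoint_left]
    intro x hx0 hx1
    rw [mem_filter, mem_filter] at hx0 hx1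
    have := (hCne x hx0.1.2 i0 i1 hne).1
    rw [hx0.2, hx1.2] at this
    exact this rfl
  have hfibcard : ∀ i0 : Fin (m+1),
      ((univ.filter C).filter (fun x => x i0 = h)).card = (good k S m).card := by
    intro i0
    refine Finset.card_nbij' (fun x => x ∘ i0.succAbove)
      (fun y => i0.insertNth h y) ?_ ?_ ?_ ?_
    · intro x hx
      rw [mem_coe, mem_filter, mem_filter] at hx
      obtain ⟨⟨-, hCx⟩, hxi0⟩ := hx
      have hne := hCne x hCx
      rw [mem_coe, mem_good]
      constructor
      · intro j
        refine (hmemS _).2 ⟨hCx.1 _, hCx.2.1 _, ?_⟩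
        have := (hne (i0.succAbove j) i0 (Fin.succAbove_ne i0 j)).1
        rw [hxi0] at this
        exact this
      · intro i j hij
        exact hne _ _ (fun e => hij (Fin.succAbove_right_injective e))
    · intro y hy
      rw [mem_coe, mem_good] at hy
      obtain ⟨hyS, hyP⟩ := hy
      have hyS' := fun i => (hmemS _).1 (hyS i)
      rw [mem_coe, mem_filter, mem_filter]
      have hval : ∀ i : Fin (m+1), Fin.insertNth (α := fun _ => ZMod p) i0 h y i = h ∨
          ∃ j, i0.succAbove j = i ∧ Fin.insertNth (α := fun _ => ZMod p) i0 h y i = y j := by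
        intro i
        rcases eq_or_ne i i0 with rfl | hne
        · left; exact Fin.insertNth_apply_same (α := fun _ => ZMod p) _ h y
        · right
          obtain ⟨j, rfl⟩ := Fin.exists_succAbove_eq hne
          exact ⟨j, rfl, Fin.insertNth_apply_succAbove (α := fun _ => ZMod p) i0 h y j⟩
      have hCx : C (Fin.insertNth (α := fun _ => ZMod p) i0 h y) := by
        have hne' : ∀ i j : Fin (m+1), i ≠ j →
            Fin.insertNth (α := fun _ => ZMod p) i0 h y i ≠ Fin.insertNth (α := fun _ => ZMod p) i0 h y j ∧
            Fin.insertNth (α := fun _ => ZMod p) i0 h y i + Fin.insertNth (α := fun _ => ZMod p) i0 h y j ≠ k := by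
          intro i j hij
          rcases eq_or_ne i i0 with rfl | hnei
          · obtain ⟨j', rfl⟩ := Fin.exists_succAbove_eq (Ne.symm hij)
            rw [Fin.insertNth_apply_same, Fin.insertNth_apply_succAbove]
            refine ⟨Ne.symm ((hyS' j').2.2), fun e => (hyS' j').2.2 ?_⟩
            linear_combination e - hhk
          · obtain ⟨i', rfl⟩ := Fin.exists_succAbove_eq hnei
            rcases eq_or_ne j i0 with rfl | hnej
            · rw [Fin.insertNth_apply_same, Fin.insertNth_apply_succAbove]
              refine ⟨(hyS' i').2.2, fun e => (hyS' i').2.2 ?_⟩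
              linear_combination e - hhk
            · obtain ⟨j', rfl⟩ := Fin.exists_succAbove_eq hnej
              rw [Fin.insertNth_apply_succAbove, Fin.insertNth_apply_succAbove]
              exact hyP i' j' (fun e => hij (congrArg i0.succAbove e))
        rw [hC]
        refine ⟨?_, ?_, fun i j hl => (hne' i j hl.ne).1, fun i j hl => (hne' i j hl.ne).2⟩
        · intro i
          rcases hval i with he | ⟨j, -, he⟩
          · rw [he]; exact h0
          · rw [he]; exact (hyS' j).1
        · intro i
          rcases hval i with he | ⟨j, -, he⟩
          · rw [he]; exact hnek
          · rw [he]; exact (hyS' j).2.1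
      exact ⟨⟨mem_univ _, hCx⟩, Fin.insertNth_apply_same (α := fun _ => ZMod p) i0 h y⟩
    · intro x hx
      rw [mem_coe, mem_filter] at hx
      funext i
      show Fin.insertNth (α := fun _ => ZMod p) i0 h (x ∘ i0.succAbove) i = x i
      rcases eq_or_ne i i0 with rfl | hne
      · rw [Fin.insertNth_apply_same, hx.2]
      · obtain ⟨j, rfl⟩ := Fin.exists_succAbove_eq hne
        rw [Fin.insertNth_apply_succAbove]
        rfl
    · intro y _
      funext j
      show Fin.insertNth (α := fun _ => ZMod p) i0 h y (i0.succAbove j) = y j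
      rw [Fin.insertNth_apply_succAbove]
  rw [hc1, hc2, Finset.card_biUnion hdisj,
    Finset.sum_congr rfl (fun i0 _ => hfibcard i0), Finset.sum_const,
    card_univ, Fintype.card_fin, smul_eq_mul,
    good_card k (m+1) S hclos hnosum, good_card k m S hclos hnosum, hScard]
  congr 1
  · exact Finset.prod_congr rfl fun j _ => by omega
  · congr 1
    exact Finset.prod_congr rfl fun j _ => by omega

theorem stmt_4 (p n : ℕ) (hp : p.Prime) [NeZero p] (hodd : Odd p) (hn : 2 ≤ n)
    (hpn : 2 * n - 1 < p) (k : ZMod p) (hk : k ≠ 0) :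
    (Finset.univ.filter (fun x : Fin (n - 1) → ZMod p =>
      (∀ i, x i ≠ 0) ∧ (∀ i, x i ≠ k) ∧
      (∀ i1 i2 : Fin (n - 1), i1 < i2 → x i1 ≠ x i2) ∧
      (∀ i1 i2 : Fin (n - 1), i1 < i2 → x i1 + x i2 ≠ k))).card
      = (∏ j ∈ Finset.range (n - 1), (p - (2 * j + 3)))
        + (n - 1) * ∏ j ∈ Finset.range (n - 2), (p - (2 * j + 3)) := by
  obtain ⟨m, rfl⟩ : ∃ m, n = m + 2 := ⟨n - 2, by omega⟩
  exact stmt_aux p m hp hodd hpn k hk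
end

section
/- Let m ≥ 2 and p be a prime with p > 2·3^{m-1}. Then the m(m+1) residues in F_p given by 3^{i-1} for 1 ≤ i ≤ m, p - 3^{i-1} for 1 ≤ i ≤ m, 3^j - 3^i for 0 ≤ i < j ≤ m-1, and p - 3^j + 3^i for 0 ≤ i < j ≤ m-1, are pairwise distinct. -/
open Finset

private lemma pow3_inj : Function.Injective (fun n : ℕ => (3:ℤ)^n) := by
  intro a b h
  have h' : (3:ℕ)^a = 3^b := by simpa using h
  exact Nat.pow_right_injective (by norm_num) h'

private lemma no_sum_nat (a b c : ℕ) (hab : a ≤ b) : 3^a + 3^b ≠ 3^c := by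
  intro h
  have h3a : 0 < 3^a := Nat.pow_pos (by norm_num)
  have h3b : 0 < 3^b := Nat.pow_pos (by norm_num)
  have hac : a < c := by
    have h3 : 3^a < 3^c := by omega
    exact (Nat.pow_lt_pow_iff_right (by norm_num)).1 h3
  obtain ⟨d, rfl⟩ := Nat.exists_eq_add_of_le hab
  obtain ⟨e, rfl⟩ : ∃ e, c = a + (e + 1) := ⟨c - a - 1, by omega⟩
  rw [pow_add, pow_add] at h
  have h' : 1 + 3^d = 3^(e+1) := by
    apply Nat.eq_of_mul_eq_mul_left h3a
    rw [Nat.mul_add, Nat.mul_one]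
    exact h
  have he : (3:ℕ) ∣ 3^(e+1) := dvd_pow_self 3 (by omega)
  rcases Nat.eq_zero_or_pos d with rfl | hd
  · simp at h'; omega
  · have hdd : (3:ℕ) ∣ 3^d := dvd_pow_self 3 (by omega)
    omega

private lemma no_sum (a b c : ℕ) : (3:ℤ)^a + 3^b ≠ 3^c := by
  intro h
  have h' : (3:ℕ)^a + 3^b = 3^c := by exact_mod_cast h
  rcases le_total a b with hab | hab
  · exact no_sum_nat a b c hab h'
  · exact no_sum_nat b a c hab (by omega)

private lemma key_nat {i j i' j' : ℕ} (hij : i < j) (hij' : i' < j') (hii' : i < i')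
    (hn : 3^j + 3^(i') = 3^(j') + 3^i) : False := by
  have h1 : (3:ℕ)^(i+1) ∣ 3^j := pow_dvd_pow 3 (by omega)
  have h2 : (3:ℕ)^(i+1) ∣ 3^(i') := pow_dvd_pow 3 (by omega)
  have h3 : (3:ℕ)^(i+1) ∣ 3^(j') := pow_dvd_pow 3 (by omega)
  have h4 : (3:ℕ)^(i+1) ∣ 3^i := by
    have := dvd_add h1 h2
    rw [hn] at this
    exact (Nat.dvd_add_right h3).mp this
  have h5 := Nat.le_of_dvd (Nat.pow_pos (by norm_num)) h4
  have h6 : (3:ℕ)^i < 3^(i+1) := Nat.pow_lt_pow_right (by norm_num) (by omega)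
  omega

private lemma diff_inj {i j i' j' : ℕ} (hij : i < j) (hij' : i' < j')
    (h : (3:ℤ)^j - 3^i = 3^(j') - 3^(i')) : i = i' ∧ j = j' := by
  have h' : (3:ℤ)^j + 3^(i') = 3^(j') + 3^i := by linarith
  have hn : (3:ℕ)^j + 3^(i') = 3^(j') + 3^i := by exact_mod_cast h'
  have hii : i = i' := by
    rcases lt_trichotomy i i' with hlt | heq | hgt
    · exact absurd (key_nat hij hij' hlt hn) id
    · exact heq
    · exact absurd (key_nat hij' hij hgt (by omega)) id
  subst hii
  refine ⟨rfl, ?_⟩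
  have : (3:ℕ)^j = 3^(j') := by omega
  exact Nat.pow_right_injective (by norm_num) this

theorem stmt_10 (m p : ℕ) (hm : 2 ≤ m) (hp : p.Prime) (hpm : 2 * 3 ^ (m - 1) < p) :
    (((Finset.Icc 1 m).image (fun i => (3 : ZMod p) ^ (i - 1)) ∪
      (Finset.Icc 1 m).image (fun i => -(3 : ZMod p) ^ (i - 1)) ∪
      ((Finset.range m ×ˢ Finset.range m).filter (fun q => q.1 < q.2)).image
        (fun q => (3 : ZMod p) ^ q.2 - (3 : ZMod p) ^ q.1) ∪
      ((Finset.range m ×ˢ Finset.range m).filter (fun q => q.1 < q.2)).image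
        (fun q => (3 : ZMod p) ^ q.1 - (3 : ZMod p) ^ q.2)).card
      = m * (m + 1)) := by
  classical
  set P := (range m ×ˢ range m).filter (fun q => q.1 < q.2) with hP
  set A : Finset ℤ := (Icc 1 m).image (fun i => (3:ℤ)^(i-1)) with hA
  set C : Finset ℤ := P.image (fun q => (3:ℤ)^q.2 - 3^q.1) with hC
  set A' : Finset ℤ := A.image (fun x => -x) with hA'
  set C' : Finset ℤ := C.image (fun x => -x) with hC'
  -- rewrite each ZMod set as the cast image of an integer set
  have e1 : (Icc 1 m).image (fun i => (3 : ZMod p) ^ (i - 1))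
      = A.image (fun x : ℤ => (x : ZMod p)) := by
    rw [hA, image_image]; refine Finset.image_congr (fun i _ => ?_); simp only [Function.comp_apply]; push_cast; ring
  have e2 : (Icc 1 m).image (fun i => -(3 : ZMod p) ^ (i - 1))
      = A'.image (fun x : ℤ => (x : ZMod p)) := by
    rw [hA', hA, image_image, image_image]
    refine Finset.image_congr (fun i _ => ?_); simp only [Function.comp_apply]; push_cast; ring
  have e3 : P.image (fun q => (3 : ZMod p) ^ q.2 - (3 : ZMod p) ^ q.1)
      = C.image (fun x : ℤ => (x : ZMod p)) := by
    rw [hC, image_image]; refine Finset.image_congr (fun q _ => ?_); simp only [Function.comp_apply]; push_cast; ring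
  have e4 : P.image (fun q => (3 : ZMod p) ^ q.1 - (3 : ZMod p) ^ q.2)
      = C'.image (fun x : ℤ => (x : ZMod p)) := by
    rw [hC', hC, image_image, image_image]
    refine Finset.image_congr (fun q _ => ?_); simp only [Function.comp_apply]; push_cast; ring
  rw [e1, e2, e3, e4, ← image_union, ← image_union, ← image_union]
  set U : Finset ℤ := A ∪ A' ∪ C ∪ C' with hU
  -- bounds on elements of U
  have hposA : ∀ x ∈ A, 0 < x ∧ x ≤ 3^(m-1) := by
    intro x hx
    simp only [hA, mem_image, mem_Icc] at hx
    obtain ⟨i, ⟨hi1, hi2⟩, rfl⟩ := hx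
    constructor
    · positivity
    · exact pow_le_pow_right₀ (by norm_num) (by omega)
  have hposC : ∀ x ∈ C, 0 < x ∧ x ≤ 3^(m-1) := by
    intro x hx
    simp only [hC, hP, mem_image, mem_filter, mem_product, mem_range] at hx
    obtain ⟨⟨i, j⟩, ⟨⟨hi, hj⟩, hij⟩, rfl⟩ := hx
    have h1 : (3:ℤ)^i < 3^j := by
      have : (3:ℕ)^i < 3^j := Nat.pow_lt_pow_right (by norm_num) hij
      exact_mod_cast this
    have h2 : (3:ℤ)^j ≤ 3^(m-1) := pow_le_pow_right₀ (by norm_num) (by omega)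
    have h3 : (0:ℤ) < 3^i := by positivity
    constructor <;> simp only <;> linarith
  have hbound : ∀ x ∈ U, -(3:ℤ)^(m-1) ≤ x ∧ x ≤ 3^(m-1) := by
    intro x hx
    simp only [hU, mem_union] at hx
    have h0 : (0:ℤ) < 3^(m-1) := by positivity
    rcases hx with ((hx | hx) | hx) | hx
    · have := hposA x hx; constructor <;> linarith [this.1, this.2]
    · simp only [hA', mem_image] at hx
      obtain ⟨y, hy, rfl⟩ := hx
      have := hposA y hy; constructor <;> linarith [this.1, this.2]
    · have := hposC x hx; constructor <;> linarith [this.1, this.2]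
    · simp only [hC', mem_image] at hx
      obtain ⟨y, hy, rfl⟩ := hx
      have := hposC y hy; constructor <;> linarith [this.1, this.2]
  -- injectivity of the cast on U
  have hinj : Set.InjOn (fun x : ℤ => (x : ZMod p)) U := by
    intro x hx y hy hxy
    have hdvd : (p:ℤ) ∣ y - x := (ZMod.intCast_eq_intCast_iff _ _ _).mp hxy |>.dvd
    have hx' := hbound x hx
    have hy' := hbound y hy
    have hp' : (2:ℤ) * 3^(m-1) < p := by exact_mod_cast hpm
    have : y - x = 0 := by
      rcases hdvd with ⟨k, hk⟩
      rcases lt_trichotomy k 0 with hk0 | rfl | hk0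
      · have : (p:ℤ) * k ≤ -p := by nlinarith [hk0]
        have := hx'.1; have := hx'.2; have := hy'.1; have := hy'.2
        nlinarith
      · omega
      · have : (p:ℤ) ≤ p * k := by nlinarith
        nlinarith [hx'.1, hx'.2, hy'.1, hy'.2]
    omega
  rw [Finset.card_image_of_injOn hinj]
  -- disjointness
  have dAA' : Disjoint A A' := by
    rw [Finset.disjoint_left]
    intro x hx hx'
    simp only [hA', mem_image] at hx'
    obtain ⟨y, hy, rfl⟩ := hx'
    have := (hposA y hy).1
    have := (hposA _ hx).1
    omega
  have dAC : Disjoint (A ∪ A') C := by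
    rw [Finset.disjoint_left]
    intro x hx hxC
    simp only [hC, hP, mem_image, mem_filter, mem_product, mem_range] at hxC
    obtain ⟨⟨i, j⟩, ⟨⟨hi, hj⟩, hij⟩, rfl⟩ := hxC
    simp only [mem_union] at hx
    rcases hx with hx | hx
    · simp only [hA, mem_image, mem_Icc] at hx
      obtain ⟨a, ⟨ha1, _⟩, ha⟩ := hx
      exact no_sum (a-1) i j (by linarith [ha])
    · simp only [hA', hA, mem_image, mem_Icc] at hx
      obtain ⟨y, ⟨a, ⟨ha1, _⟩, rfl⟩, ha⟩ := hx
      have h1 : (3:ℤ)^i < 3^j := by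
        have : (3:ℕ)^i < 3^j := Nat.pow_lt_pow_right (by norm_num) hij
        exact_mod_cast this
      have h2 : (0:ℤ) < 3^(a-1) := by positivity
      linarith
  have dC' : Disjoint (A ∪ A' ∪ C) C' := by
    rw [Finset.disjoint_left]
    intro x hx hxC'
    simp only [hC', hC, hP, mem_image, mem_filter, mem_product, mem_range] at hxC'
    obtain ⟨y, ⟨⟨i, j⟩, ⟨⟨hi, hj⟩, hij⟩, rfl⟩, rfl⟩ := hxC'
    have h1 : (3:ℤ)^i < 3^j := by
      have : (3:ℕ)^i < 3^j := Nat.pow_lt_pow_right (by norm_num) hij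
      exact_mod_cast this
    simp only [mem_union] at hx
    rcases hx with (hx | hx) | hx
    · have := (hposA _ hx).1; linarith
    · simp only [hA', hA, mem_image, mem_Icc] at hx
      obtain ⟨y, ⟨a, ⟨ha1, _⟩, rfl⟩, ha⟩ := hx
      exact no_sum (a-1) i j (by linarith [ha])
    · have := (hposC _ hx).1; linarith
  rw [hU, Finset.card_union_of_disjoint dC', Finset.card_union_of_disjoint dAC,
    Finset.card_union_of_disjoint dAA']
  -- cardinalities
  have cardA : A.card = m := by
    rw [hA, Finset.card_image_of_injOn, Nat.card_Icc]
    · omega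
    · intro a ha b hb hab
      simp only [coe_Icc, Set.mem_Icc] at ha hb
      have := pow3_inj hab
      omega
  have cardA' : A'.card = m := by
    rw [hA', Finset.card_image_of_injective _ neg_injective, cardA]
  have cardC : C.card = P.card := by
    rw [hC, Finset.card_image_of_injOn]
    intro q hq q' hq' hqq
    simp only [hP, coe_filter, Set.mem_setOf_eq, mem_product, mem_range] at hq hq'
    have := diff_inj hq.2 hq'.2 hqq
    exact Prod.ext this.1 this.2
  have cardC' : C'.card = P.card := by
    rw [hC', Finset.card_image_of_injective _ neg_injective, cardC]
  have hPcard : P.card * 2 = m * (m - 1) := by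
    have h1 : P.card = ∑ i ∈ range m, (m - 1 - i) := by
      rw [hP, Finset.card_filter, Finset.sum_product]
      refine Finset.sum_congr rfl (fun i hi => ?_)
      rw [← Finset.card_filter]
      have : (range m).filter (fun j => i < j) = Ioo i m := by
        ext j; simp [Finset.mem_Ioo, Finset.mem_range, and_comm]
      rw [this, Nat.card_Ioo]
      omega
    rw [h1, Finset.sum_range_reflect (fun i => i) m, Finset.sum_range_id_mul_two]
  rw [cardA, cardA', cardC, cardC']
  obtain ⟨n, rfl⟩ : ∃ n, m = n + 1 := ⟨m - 1, by omega⟩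
  simp only [Nat.add_sub_cancel] at hPcard
  nlinarith [hPcard]
end

section
/- Let G = K_m be the complete graph on vertices v_1,...,v_m, let p be a prime with p > 2·3^{m-1}, and define W((v_q,v_r)) ∈ F_p^m for q < r by coordinates w_t = 0 for t ∉ {q,r}, w_q = 3^{r-q-1}, and w_r = 1. Then W is a proper weight function: no simple path or simple even cycle (e_1,...,e_d) in K_m satisfies W(e_1) - W(e_2) + ... + (-1)^{d-1}W(e_d) = 0. -/
/-- Alternating sum `l₀ - l₁ + l₂ - ...` of a list in an additive commutative group. -/
def altSum {A : Type*} [AddCommGroup A] (l : List A) : A :=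
  (l.zipIdx.map (fun q => ((-1 : ℤ) ^ q.2) • q.1)).sum

/-- A walk that is a simple path or a simple cycle of even length. -/
def IsPathOrEvenCycle {V : Type*} {G : SimpleGraph V} {u v : V} (w : G.Walk u v) : Prop :=
  w.IsPath ∨ ∃ h : v = u, (w.copy rfl h).IsCycle ∧ Even w.length

variable {A : Type*} [AddCommGroup A]

private lemma enumFrom_altSum (l : List A) : ∀ n : ℕ,
    ((l.zipIdx n).map (fun q => ((-1 : ℤ) ^ q.2) • q.1)).sum
      = ((-1 : ℤ) ^ n) • ((l.zipIdx 0).map (fun q => ((-1 : ℤ) ^ q.2) • q.1)).sum := by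
  induction l with
  | nil => simp
  | cons a l ih =>
    intro n
    simp only [List.zipIdx_cons, List.map_cons, List.sum_cons, ih (n+1), ih 1]
    simp [pow_succ, mul_smul, smul_add]

@[simp] lemma altSum_nil : altSum ([] : List A) = 0 := rfl

lemma altSum_cons (a : A) (l : List A) : altSum (a :: l) = a - altSum l := by
  unfold altSum
  rw [List.zipIdx_cons]
  simp only [List.map_cons, List.sum_cons, pow_zero, one_smul]
  rw [enumFrom_altSum l]
  simp [sub_eq_add_neg]

lemma altSum_append (l₁ l₂ : List A) :
    altSum (l₁ ++ l₂) = altSum l₁ + ((-1 : ℤ) ^ l₁.length) • altSum l₂ := by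
  induction l₁ with
  | nil => simp
  | cons a l ih =>
    simp only [List.cons_append, altSum_cons, ih, List.length_cons, pow_succ]
    rw [mul_comm, mul_smul]
    simp [sub_add_eq_sub_sub, sub_eq_add_neg]
    abel

lemma altSum_rotate (l : List A) (n : ℕ) (h : Even l.length) :
    altSum (l.rotate n) = ((-1 : ℤ) ^ n) • altSum l := by
  induction n generalizing l with
  | zero => simp
  | succ n ih =>
    have h1 : altSum (l.rotate 1) = -altSum l := by
      cases l with
      | nil => simp
      | cons a l =>
        rw [List.rotate_cons_succ, List.rotate_zero, altSum_append, altSum_cons]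
        have hodd : Odd l.length := by
          rw [List.length_cons, Nat.even_add_one] at h
          exact Nat.not_even_iff_odd.1 h
        rw [hodd.neg_one_pow]
        simp [altSum_cons, sub_eq_add_neg]
    have : l.rotate (n + 1) = (l.rotate 1).rotate n := by
      rw [List.rotate_rotate, add_comm]
    rw [this, ih _ (by simpa using h), h1, pow_succ]
    rw [mul_comm, mul_smul]
    simp

lemma altSum_apply {α : Type*} {M : Type*} [AddCommGroup M] (l : List (α → M)) (t : α) :
    altSum l t = altSum (l.map (fun f => f t)) := by
  induction l with
  | nil => simp
  | cons a l ih => simp [altSum_cons, ih]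

lemma altSum_intCast {R : Type*} [Ring R] (l : List ℤ) :
    altSum (l.map (fun z => ((z : ℤ) : R))) = ((altSum l : ℤ) : R) := by
  induction l with
  | nil => simp
  | cons a l ih =>
    rw [List.map_cons, altSum_cons, altSum_cons, ih]
    push_cast
    ring

open SimpleGraph Walk

section Graph

variable {m : ℕ}

/-- Integer coefficient at coordinate `t` of the weight of an edge. -/
def gI (t : Fin m) : Sym2 (Fin m) → ℤ :=
  Sym2.lift ⟨fun a b =>
    if t = a then 3 ^ ((b : ℕ) - (t : ℕ) - 1)
    else if t = b then 3 ^ ((a : ℕ) - (t : ℕ) - 1) else 0, by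
      intro a b
      dsimp only
      rcases eq_or_ne t a with rfl | h1
      · rcases eq_or_ne t b with rfl | h2
        · rfl
        · rw [if_pos rfl, if_neg h2, if_pos rfl]
      · rcases eq_or_ne t b with rfl | h2
        · rw [if_neg h1, if_pos rfl, if_pos rfl]
        · rw [if_neg h1, if_neg h2, if_neg h2, if_neg h1]⟩

lemma gI_mk (t a b : Fin m) : gI t s(a, b) =
    if t = a then 3 ^ ((b : ℕ) - (t : ℕ) - 1)
    else if t = b then 3 ^ ((a : ℕ) - (t : ℕ) - 1) else 0 := rfl

/-- Abbreviation for the alternating sum of integer coefficients along a walk. -/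
def SW (t : Fin m) {u v : Fin m} (w : (⊤ : SimpleGraph (Fin m)).Walk u v) : ℤ :=
  altSum (w.edges.map (gI t))

lemma SW_nil (t u : Fin m) : SW t (Walk.nil : (⊤ : SimpleGraph (Fin m)).Walk u u) = 0 := rfl

lemma SW_cons (t : Fin m) {u x v : Fin m} (h : (⊤ : SimpleGraph (Fin m)).Adj u x)
    (w : (⊤ : SimpleGraph (Fin m)).Walk x v) :
    SW t (Walk.cons h w) = gI t s(u, x) - SW t w := by
  simp [SW, altSum_cons]

lemma SW_zero (t : Fin m) {u v : Fin m} (w : (⊤ : SimpleGraph (Fin m)).Walk u v)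
    (ht : t ∉ w.support) : SW t w = 0 := by
  induction w with
  | nil => rfl
  | @cons a b c h w ih =>
    rw [support_cons] at ht
    have h1 : t ≠ a := fun h' => ht (by simp [h'])
    have h2 : t ∉ w.support := fun h' => ht (by simp [h'])
    have h3 : t ≠ b := fun h' => h2 (h' ▸ w.start_mem_support)
    rw [SW_cons, ih h2, gI_mk, if_neg h1, if_neg h3, sub_zero]

lemma SW_start (t : Fin m) {v : Fin m} (w : (⊤ : SimpleGraph (Fin m)).Walk t v)
    (h0 : 0 < w.length) (ht : t ∉ w.support.tail) :
    ∃ x ∈ w.support.tail, SW t w = 3 ^ ((x : ℕ) - (t : ℕ) - 1) := by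
  cases w with
  | nil => simp at h0
  | @cons a b c h w =>
    rw [support_cons, List.tail_cons] at ht
    refine ⟨b, by simp [support_cons, w.start_mem_support], ?_⟩
    rw [SW_cons, SW_zero t w ht, gI_mk, if_pos rfl, sub_zero]

lemma SW_end : ∀ {u t : Fin m} (w : (⊤ : SimpleGraph (Fin m)).Walk u t),
    0 < w.length → t ∉ w.support.dropLast →
    ∃ y ∈ w.support, y ≠ t ∧ (1 < w.length → y ∈ w.support.tail) ∧
      SW t w = (-1 : ℤ) ^ (w.length - 1) * 3 ^ ((y : ℕ) - (t : ℕ) - 1) := by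
  intro u t w
  induction w with
  | nil => intro h0; simp at h0
  | @cons a b c h w ih =>
    intro h0 ht
    have hwne : w.support ≠ [] := w.support_ne_nil
    have hdrop : (Walk.cons h w).support.dropLast = a :: w.support.dropLast := by
      rw [support_cons, List.dropLast_cons_of_ne_nil hwne]
    rw [hdrop] at ht
    have hta : c ≠ a := fun h' => ht (by simp [h'])
    have htw : c ∉ w.support.dropLast := fun h' => ht (by simp [h'])
    cases w with
    | nil =>
      refine ⟨a, by simp, hta.symm, by simp, ?_⟩
      rw [SW_cons, SW_nil, sub_zero, gI_mk, if_neg hta, if_pos rfl]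
      simp
    | @cons _ x _ h' w' =>
      have hpos : 0 < (Walk.cons h' w').length := by simp
      obtain ⟨y, hy, hyt, hytail, hSW⟩ := ih hpos htw
      have htb : c ≠ b := by
        intro h''
        have hmem : b ∈ (Walk.cons h' w').support.dropLast := by
          rw [support_cons, List.dropLast_cons_of_ne_nil w'.support_ne_nil]
          exact List.mem_cons_self
        exact htw (h'' ▸ hmem)
      refine ⟨y, by simp [support_cons]; simp [support_cons] at hy; tauto, hyt,
        fun _ => by simp [support_cons]; simp [support_cons] at hy; tauto, ?_⟩
      rw [SW_cons, hSW, gI_mk, if_neg hta, if_neg htb, zero_sub]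
      have hl : (Walk.cons h (Walk.cons h' w')).length - 1
          = ((Walk.cons h' w').length - 1) + 1 := by
        simp [Walk.length_cons]
      rw [hl, pow_succ]
      ring

lemma pow3_lt (a b : ℕ) (h : a < b) : (3:ℤ)^a < 3^b :=
  pow_lt_pow_right₀ (by norm_num) h

lemma pow3_ne {a b : ℕ} (h : a ≠ b) : (3:ℤ)^a ≠ (3:ℤ)^b := by
  rcases h.lt_or_gt with h | h
  · exact (pow3_lt _ _ h).ne
  · exact (pow3_lt _ _ h).ne'

lemma pow3_le {a b : ℕ} (h : a ≤ b) : (3:ℤ)^a ≤ (3:ℤ)^b :=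
  pow_le_pow_right₀ (by norm_num) h

lemma exp_bound {t x : Fin m} (h : t < x) : (x : ℕ) - (t : ℕ) - 1 ≤ m - 2 := by
  have h1 : (t : ℕ) < (x : ℕ) := h
  have h2 : (x : ℕ) < m := x.isLt
  omega

lemma keyPath (t : Fin m) {u v : Fin m} (w : (⊤ : SimpleGraph (Fin m)).Walk u v)
    (hw : w.IsPath) (h0 : 0 < w.length) (ht : t ∈ w.support)
    (hmin : ∀ z ∈ w.support, t ≤ z) :
    SW t w ≠ 0 ∧ |SW t w| ≤ 2 * 3 ^ (m - 2) := by
  set w1 := w.takeUntil t ht with hw1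
  set w2 := w.dropUntil t ht with hw2
  have hspec : w1.append w2 = w := w.take_spec ht
  have hS : SW t w = SW t w1 + (-1:ℤ) ^ w1.length * SW t w2 := by
    conv_lhs => rw [← hspec]
    rw [SW, edges_append, List.map_append, altSum_append, List.length_map, length_edges]
    rw [zsmul_eq_mul]
    rfl
  have hlen : w1.length + w2.length = w.length := by
    have := congrArg Walk.length hspec
    rwa [length_append] at this
  have hsupp : w1.support ++ w2.support.tail = w.support := by
    have := congrArg Walk.support hspec
    rwa [support_append] at this
  have hnodup : (w1.support ++ w2.support.tail).Nodup := by
    rw [hsupp]; exact hw.support_nodup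
  have hdisj : w1.support.Disjoint w2.support.tail :=
    List.disjoint_of_nodup_append hnodup
  have ht1 : t ∉ w1.support.dropLast := by
    have hcount : w1.support.count t = 1 := w.count_support_takeUntil_eq_one ht
    have hne : w1.support ≠ [] := w1.support_ne_nil
    have hlast : w1.support.getLast hne = t := w1.getLast_support
    have hsplit := List.dropLast_append_getLast hne
    rw [hlast] at hsplit
    intro hmem
    have hone : List.count t [t] = 1 := by simp
    have : 2 ≤ w1.support.count t := by
      rw [← hsplit, List.count_append, hone]
      have h1 : 0 < w1.support.dropLast.count t := List.count_pos_iff.mpr hmem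
      omega
    omega
  have ht2 : t ∉ w2.support.tail := fun hmem => hdisj w1.end_mem_support hmem
  have hmin' : ∀ z ∈ w.support, z ≠ t → t < z := fun z hz hzt =>
    lt_of_le_of_ne (hmin z hz) (Ne.symm hzt)
  rcases Nat.eq_zero_or_pos w1.length with h1 | h1
  · -- t is the start
    have hw1z : SW t w1 = 0 := by
      have : w1.edges = [] := by
        have := w1.length_edges
        rw [h1] at this
        exact List.eq_nil_of_length_eq_zero this
      rw [SW, this]; rfl
    have h2 : 0 < w2.length := by omega
    obtain ⟨x, hx, hSx⟩ := SW_start t w2 h2 ht2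
    have hxw : x ∈ w.support := by
      rw [← hsupp]; exact List.mem_append_right _ hx
    have htx : t < x := hmin' x hxw (fun h' => ht2 (h' ▸ hx))
    have hexp := exp_bound htx
    constructor
    · rw [hS, hw1z, hSx, h1]
      simp only [pow_zero, one_mul, zero_add]
      positivity
    · rw [hS, hw1z, hSx, h1]
      simp only [pow_zero, one_mul, zero_add]
      rw [abs_of_pos (by positivity)]
      calc (3:ℤ) ^ ((x:ℕ) - t - 1) ≤ 3 ^ (m - 2) := pow3_le hexp
        _ ≤ 2 * 3 ^ (m - 2) := by nlinarith [pow_pos (show (0:ℤ) < 3 by norm_num) (m-2)]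
  · rcases Nat.eq_zero_or_pos w2.length with h2 | h2
    · -- t is the end
      have hw2z : SW t w2 = 0 := by
        have : w2.edges = [] := by
          have := w2.length_edges
          rw [h2] at this
          exact List.eq_nil_of_length_eq_zero this
        rw [SW, this]; rfl
      obtain ⟨y, hy, hyt, _, hSy⟩ := SW_end w1 h1 ht1
      have hyw : y ∈ w.support := by
        rw [← hsupp]; exact List.mem_append_left _ hy
      have hty : t < y := hmin' y hyw hyt
      have hexp := exp_bound hty
      constructor
      · rw [hS, hw2z, hSy, mul_zero, add_zero]
        exact mul_ne_zero (pow_ne_zero _ (by norm_num)) (by positivity)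
      · rw [hS, hw2z, hSy, mul_zero, add_zero, abs_mul, abs_pow, abs_neg, abs_one,
          one_pow, one_mul, abs_of_pos (by positivity)]
        calc (3:ℤ) ^ ((y:ℕ) - t - 1) ≤ 3 ^ (m - 2) := pow3_le hexp
          _ ≤ 2 * 3 ^ (m - 2) := by nlinarith [pow_pos (show (0:ℤ) < 3 by norm_num) (m-2)]
    · -- t is interior
      obtain ⟨y, hy, hyt, _, hSy⟩ := SW_end w1 h1 ht1
      obtain ⟨x, hx, hSx⟩ := SW_start t w2 h2 ht2
      have hyw : y ∈ w.support := by
        rw [← hsupp]; exact List.mem_append_left _ hy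
      have hxw : x ∈ w.support := by
        rw [← hsupp]; exact List.mem_append_right _ hx
      have hty : t < y := hmin' y hyw hyt
      have htx : t < x := hmin' x hxw (fun h' => ht2 (h' ▸ hx))
      have hxy : y ≠ x := fun h' => hdisj hy (h' ▸ hx)
      have hexpne : (y:ℕ) - t - 1 ≠ (x:ℕ) - t - 1 := by
        have h1' : (t:ℕ) < y := hty
        have h2' : (t:ℕ) < x := htx
        have : (y:ℕ) ≠ (x:ℕ) := fun h' => hxy (Fin.val_injective h')
        omega
      have hfactor : SW t w = (-1:ℤ) ^ (w1.length - 1) *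
          (3 ^ ((y:ℕ) - t - 1) - 3 ^ ((x:ℕ) - t - 1)) := by
        have hpow : (-1:ℤ) ^ w1.length = -((-1:ℤ) ^ (w1.length - 1)) := by
          conv_lhs => rw [show w1.length = (w1.length - 1) + 1 from by omega]
          rw [pow_succ]; ring
        rw [hS, hSy, hSx, hpow]
        ring
      have hne3 : (3:ℤ) ^ ((y:ℕ) - t - 1) - 3 ^ ((x:ℕ) - t - 1) ≠ 0 :=
        sub_ne_zero.mpr (pow3_ne hexpne)
      constructor
      · rw [hfactor]
        exact mul_ne_zero (pow_ne_zero _ (by norm_num)) hne3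
      · rw [hfactor, abs_mul, abs_pow, abs_neg, abs_one, one_pow, one_mul]
        calc |(3:ℤ) ^ ((y:ℕ) - t - 1) - 3 ^ ((x:ℕ) - t - 1)|
            ≤ |(3:ℤ) ^ ((y:ℕ) - t - 1)| + |(3:ℤ) ^ ((x:ℕ) - t - 1)| := abs_sub _ _
          _ ≤ 3 ^ (m - 2) + 3 ^ (m - 2) := by
              rw [abs_of_pos (by positivity), abs_of_pos (by positivity)]
              exact add_le_add (pow3_le (exp_bound hty)) (pow3_le (exp_bound htx))
          _ = 2 * 3 ^ (m - 2) := by ring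

lemma keyCycle (t : Fin m) (c : (⊤ : SimpleGraph (Fin m)).Walk t t)
    (hc : c.IsCycle) (heven : Even c.length)
    (hmin : ∀ z ∈ c.support, t ≤ z) :
    SW t c ≠ 0 ∧ |SW t c| ≤ 2 * 3 ^ (m - 2) := by
  cases c with
  | nil => exact absurd rfl hc.ne_nil
  | @cons a x c h w =>
    have h3 : 3 ≤ (Walk.cons h w).length := hc.three_le_length
    rw [length_cons] at h3
    have hlw : 1 < w.length := by omega
    have hnodup : w.support.Nodup := by
      have := hc.support_nodup
      rwa [support_cons, List.tail_cons] at this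
    have hne : w.support ≠ [] := w.support_ne_nil
    have hlast : w.support.getLast hne = t := w.getLast_support
    have htdrop : t ∉ w.support.dropLast := by
      have hsplit := List.dropLast_append_getLast hne
      rw [hlast] at hsplit
      intro hmem
      have := hnodup
      rw [← hsplit] at this
      exact (List.disjoint_of_nodup_append this) hmem (List.mem_singleton_self t)
    obtain ⟨y, hy, hyt, hytail, hSy⟩ := SW_end w (by omega) htdrop
    have hytail' : y ∈ w.support.tail := hytail hlw
    have hxy : y ≠ x := by
      intro h'
      have hx_head : w.support = x :: w.support.tail := w.support_eq_cons
      have : x ∉ w.support.tail := by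
        intro hmem
        rw [hx_head] at hnodup
        exact (List.nodup_cons.mp hnodup).1 hmem
      exact this (h' ▸ hytail')
    have htx : t ≠ x := h.ne
    have hty : t < y := by
      refine lt_of_le_of_ne (hmin y ?_) (Ne.symm hyt)
      rw [support_cons]; exact List.mem_cons_of_mem _ hy
    have htx' : t < x := by
      refine lt_of_le_of_ne (hmin x ?_) htx
      rw [support_cons]; exact List.mem_cons_of_mem _ w.start_mem_support
    have hsign : (-1:ℤ) ^ (w.length - 1) = 1 := by
      refine Even.neg_one_pow ?_
      rw [length_cons, Nat.even_add_one] at heven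
      rw [Nat.even_sub (by omega)]
      simpa using heven
    have hSW : SW t (Walk.cons h w) = 3 ^ ((x:ℕ) - t - 1) - 3 ^ ((y:ℕ) - t - 1) := by
      rw [SW_cons, hSy, hsign, one_mul, gI_mk, if_pos rfl]
    have hexpne : (x:ℕ) - t - 1 ≠ (y:ℕ) - t - 1 := by
      have h1' : (t:ℕ) < y := hty
      have h2' : (t:ℕ) < x := htx'
      have : (y:ℕ) ≠ (x:ℕ) := fun h' => hxy (Fin.val_injective h')
      omega
    constructor
    · rw [hSW]
      exact sub_ne_zero.mpr (pow3_ne hexpne)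
    · rw [hSW]
      calc |(3:ℤ) ^ ((x:ℕ) - t - 1) - 3 ^ ((y:ℕ) - t - 1)|
          ≤ |(3:ℤ) ^ ((x:ℕ) - t - 1)| + |(3:ℤ) ^ ((y:ℕ) - t - 1)| := abs_sub _ _
        _ ≤ 3 ^ (m - 2) + 3 ^ (m - 2) := by
            rw [abs_of_pos (by positivity), abs_of_pos (by positivity)]
            exact add_le_add (pow3_le (exp_bound htx')) (pow3_le (exp_bound hty))
        _ = 2 * 3 ^ (m - 2) := by ring

end Graph

section Main

variable {m p : ℕ}

lemma W_coord [NeZero p] (W : Sym2 (Fin m) → (Fin m → ZMod p))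
    (hW : ∀ q r : Fin m, q < r →
      W s(q, r) = fun t =>
        if t = q then (3 : ZMod p) ^ ((r : ℕ) - (q : ℕ) - 1)
        else if t = r then 1 else 0)
    (a b : Fin m) (hab : a < b) (t : Fin m) :
    W s(a, b) t = ((gI t s(a, b) : ℤ) : ZMod p) := by
  rw [hW a b hab, gI_mk]
  dsimp only
  split_ifs with h1 h2
  · rw [h1]; push_cast; ring
  · have hz : (a : ℕ) - (b : ℕ) - 1 = 0 := by
      have : (a : ℕ) < (b : ℕ) := hab
      omega
    rw [h2, hz, pow_zero]
    norm_num
  · norm_num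

lemma W_coord' [NeZero p] (W : Sym2 (Fin m) → (Fin m → ZMod p))
    (hW : ∀ q r : Fin m, q < r →
      W s(q, r) = fun t =>
        if t = q then (3 : ZMod p) ^ ((r : ℕ) - (q : ℕ) - 1)
        else if t = r then 1 else 0)
    (a b : Fin m) (hab : a ≠ b) (t : Fin m) :
    W s(a, b) t = ((gI t s(a, b) : ℤ) : ZMod p) := by
  rcases hab.lt_or_gt with h | h
  · exact W_coord W hW a b h t
  · rw [Sym2.eq_swap]
    exact W_coord W hW b a h t

end Main

theorem stmt_18 (m p : ℕ) (hp : p.Prime) [NeZero p] (hpm : 2 * 3 ^ (m - 1) < p)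
    (W : Sym2 (Fin m) → (Fin m → ZMod p))
    (hW : ∀ q r : Fin m, q < r →
      W s(q, r) = fun t =>
        if t = q then (3 : ZMod p) ^ ((r : ℕ) - (q : ℕ) - 1)
        else if t = r then 1 else 0) :
    ∀ (u v : Fin m) (w : (⊤ : SimpleGraph (Fin m)).Walk u v),
      0 < w.length → IsPathOrEvenCycle w → altSum (w.edges.map W) ≠ 0 := by
  intro u v w hlen hPC hzero
  -- choose t : the minimal vertex of the support
  have hne : w.support.toFinset.Nonempty := ⟨u, by simp [w.start_mem_support]⟩
  set t := w.support.toFinset.min' hne with htdef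
  have ht : t ∈ w.support := List.mem_toFinset.mp (w.support.toFinset.min'_mem hne)
  have hmin : ∀ z ∈ w.support, t ≤ z := fun z hz =>
    w.support.toFinset.min'_le z (List.mem_toFinset.mpr hz)
  -- the numeric bound
  have hbound : (2 * 3 ^ (m - 2) : ℤ) < (p : ℤ) := by
    have h1 : (3:ℕ) ^ (m - 2) ≤ 3 ^ (m - 1) := Nat.pow_le_pow_right (by norm_num) (by omega)
    have : 2 * 3 ^ (m - 2) < p := by omega
    exact_mod_cast this
  -- the coordinate-t sum vanishes
  have hcast : ((SW t w : ℤ) : ZMod p) = 0 := by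
    have h2 : (altSum (w.edges.map W)) t = 0 := by rw [hzero]; rfl
    rw [altSum_apply, List.map_map] at h2
    have h3 : w.edges.map ((fun f => f t) ∘ W) = w.edges.map (fun e => ((gI t e : ℤ) : ZMod p)) := by
      apply List.map_congr_left
      intro e he
      have hE : e ∈ (⊤ : SimpleGraph (Fin m)).edgeSet := w.edges_subset_edgeSet he
      induction e using Sym2.ind with
      | _ a b =>
        have hab : a ≠ b := by
          rw [SimpleGraph.mem_edgeSet] at hE
          exact hE.ne
        exact W_coord' W hW a b hab t
    rw [h3] at h2
    rw [show (w.edges.map (fun e => ((gI t e : ℤ) : ZMod p)))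
        = (w.edges.map (gI t)).map (fun z : ℤ => ((z : ℤ) : ZMod p)) from by
      rw [List.map_map]; rfl] at h2
    rw [altSum_intCast] at h2
    exact h2
  have hdvd : (p : ℤ) ∣ SW t w := (ZMod.intCast_zmod_eq_zero_iff_dvd _ _).mp hcast
  -- now get the contradiction from the key lemmas
  have hkey : SW t w ≠ 0 ∧ |SW t w| ≤ 2 * 3 ^ (m - 2) := by
    rcases hPC with hpath | ⟨hv, hcyc, heven⟩
    · exact keyPath t w hpath hlen ht hmin
    · subst hv
      rw [Walk.copy_rfl_rfl] at hcyc
      set c := w.rotate t ht with hcdef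
      have hc : c.IsCycle := hcyc.rotate ht
      have hrot : c.edges ~r w.edges := w.rotate_edges t ht
      have hlenc : c.length = w.length := by
        have := hrot.perm.length_eq
        rwa [length_edges, length_edges] at this
      have hevenc : Even c.length := hlenc ▸ heven
      have hminc : ∀ z ∈ c.support, t ≤ z := by
        intro z hz
        rw [c.support_eq_cons] at hz
        rcases List.mem_cons.mp hz with rfl | hz
        · exact le_rfl
        · have htail : c.support.tail ~r w.support.tail := w.support_rotate t ht
          have : z ∈ w.support.tail := htail.mem_iff.mp hz
          exact hmin z (by rw [w.support_eq_cons]; exact List.mem_cons_of_mem _ this)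
      obtain ⟨hne0, hble⟩ := keyCycle t c hc hevenc hminc
      obtain ⟨n, hn⟩ := hrot
      have hSrel : SW t w = (-1:ℤ) ^ n * SW t c := by
        rw [SW, ← hn, List.map_rotate, altSum_rotate, zsmul_eq_mul]
        · rfl
        · rw [List.length_map, length_edges]
          exact hevenc
      constructor
      · rw [hSrel]
        exact mul_ne_zero (pow_ne_zero _ (by norm_num)) hne0
      · rw [hSrel, abs_mul, abs_pow, abs_neg, abs_one, one_pow, one_mul]
        exact hble
  obtain ⟨hne0, hble⟩ := hkey
  have hple : (p : ℤ) ≤ |SW t w| :=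
    Int.le_of_dvd (abs_pos.mpr hne0) ((dvd_abs _ _).mpr hdvd)
  omega
end
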